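/- Suppose the two balls of the bouncing-ball system have equal positive masses (so that at a ball–ball collision they exchange velocities) and that f belongs to the class 𝒞. Then there exists a motion of the system such that limsup_{i→∞} |v⁽¹⁾ᵢ| = limsup_{i→∞} |v⁽²⁾ᵢ| = ∞ while max(liminf_{i→∞} |v⁽¹⁾ᵢ|, liminf_{i→∞} |v⁽²⁾ᵢ|) < ∞, where v⁽²⁾ᵢ denotes the velocity of the lower ball P₂ just after its i-th collision with the plate and v⁽¹⁾ᵢ denotes the velocity of the upper ball P₁ just after its i-th collision with P₂. -/

import Mathlib

open Filter Topology

/-- A motion of the one-dimensional system of two bouncing balls `P₁` (upper,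
mass `m₁`) and `P₂` (lower, mass `m₂`) above a plate oscillating with height
`f(t)`, in constant gravity `g`.  `x₁, x₂` are the positions, `v₁, v₂` the
velocities, and `coll` the (discrete) set of collision times.  Between
collisions the balls are in free fall; at a plate collision `P₂` reflects by
`v₂⁺ = −v₂⁻ + 2 f'(t)`; at a ball–ball collision the elastic collision law
with `α = (m₁−m₂)/(m₁+m₂)` holds; triple collisions are excluded. -/
structure BouncingBallMotion (g : ℝ) (f : ℝ → ℝ) (m₁ m₂ : ℝ) where
  x₁ : ℝ → ℝ
  x₂ : ℝ → ℝ
  v₁ : ℝ → ℝ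
  v₂ : ℝ → ℝ
  coll : Set ℝ
  cont₁ : ContinuousOn x₁ (Set.Ici 0)
  cont₂ : ContinuousOn x₂ (Set.Ici 0)
  order : ∀ t ∈ Set.Ici (0 : ℝ), f t ≤ x₂ t ∧ x₂ t ≤ x₁ t
  coll_sub : coll ⊆ Set.Ici 0
  coll_discrete : ∀ t : ℝ, ∃ ε > (0 : ℝ), ∀ s ∈ coll, |s - t| < ε → s = t
  freefall₁ : ∀ t ∈ Set.Ici (0 : ℝ) \ coll,
    HasDerivAt x₁ (v₁ t) t ∧ HasDerivAt v₁ (-g) t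
  freefall₂ : ∀ t ∈ Set.Ici (0 : ℝ) \ coll,
    HasDerivAt x₂ (v₂ t) t ∧ HasDerivAt v₂ (-g) t
  contact_mem_coll : ∀ t ∈ Set.Ici (0 : ℝ), x₂ t = f t ∨ x₁ t = x₂ t → t ∈ coll
  coll_is_contact : ∀ t ∈ coll, x₂ t = f t ∨ x₁ t = x₂ t
  no_triple : ∀ t ∈ coll, ¬(x₂ t = f t ∧ x₁ t = x₂ t)
  plate_law : ∀ t ∈ coll, 0 < t → x₂ t = f t →
    (∃ a b : ℝ, Tendsto v₂ (𝓝[<] t) (𝓝 a) ∧ Tendsto v₂ (𝓝[>] t) (𝓝 b) ∧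
      b = -a + 2 * deriv f t) ∧
    (∃ a : ℝ, Tendsto v₁ (𝓝[<] t) (𝓝 a) ∧ Tendsto v₁ (𝓝[>] t) (𝓝 a))
  ball_law : ∀ t ∈ coll, 0 < t → x₁ t = x₂ t →
    ∃ a₁ a₂ b₁ b₂ : ℝ,
      Tendsto v₁ (𝓝[<] t) (𝓝 a₁) ∧ Tendsto v₂ (𝓝[<] t) (𝓝 a₂) ∧
      Tendsto v₁ (𝓝[>] t) (𝓝 b₁) ∧ Tendsto v₂ (𝓝[>] t) (𝓝 b₂) ∧
      b₁ = (m₁ - m₂) / (m₁ + m₂) * a₁ + (1 - (m₁ - m₂) / (m₁ + m₂)) * a₂ ∧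
      b₂ = (1 + (m₁ - m₂) / (m₁ + m₂)) * a₁ - (m₁ - m₂) / (m₁ + m₂) * a₂

noncomputable section BB
open Set

/-- index of the flight containing `t` -/
noncomputable def bidx (s : ℕ → ℝ) (t : ℝ) : ℕ := sSup {j | s j ≤ t}

/-- the `j`-th flight parabola -/
noncomputable def bpar (g f₀ : ℝ) (s ν : ℕ → ℝ) (j : ℕ) (t : ℝ) : ℝ :=
  f₀ + ν j * (t - s j) - g / 2 * (t - s j) ^ 2

/-- the trajectory -/
noncomputable def btraj (g f₀ : ℝ) (s ν : ℕ → ℝ) (t : ℝ) : ℝ :=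
  bpar g f₀ s ν (bidx s t) t

/-- the velocity -/
noncomputable def bvel (g : ℝ) (s ν : ℕ → ℝ) (t : ℝ) : ℝ :=
  ν (bidx s t) - g * (t - s (bidx s t))

structure TrajHyp (g T L f₀ : ℝ) (f : ℝ → ℝ) (s ν : ℕ → ℝ) : Prop where
  hg : 0 < g
  hT : 0 < T
  hL : 0 ≤ L
  hLip : ∀ a b, |f a - f b| ≤ L * |a - b|
  hfs : ∀ j, f (s j) = f₀
  hstep : ∀ j, s (j + 1) = s j + 2 * ν j / g
  hνL : ∀ j, L < ν j / 2
  hνT : ∀ j, T ≤ 2 * ν j / g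

namespace TrajHyp

variable {g T L f₀ : ℝ} {f : ℝ → ℝ} {s ν : ℕ → ℝ} (H : TrajHyp g T L f₀ f s ν)
include H

theorem νpos (j : ℕ) : 0 < ν j := by
  have h1 := H.hνL j; have h2 := H.hL; linarith

theorem s_lt_succ (j : ℕ) : s j < s (j + 1) := by
  have := H.hstep j
  have h1 := H.νpos j
  have hg := H.hg
  have : s (j+1) - s j = 2 * ν j / g := by linarith
  nlinarith [div_pos (by linarith : (0:ℝ) < 2 * ν j) hg]

theorem s_mono : StrictMono s := strictMono_nat_of_lt_succ H.s_lt_succ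

theorem s_ge (j : ℕ) : s 0 + j * T ≤ s j := by
  induction j with
  | zero => simp
  | succ n ih =>
    have h1 := H.hstep n
    have h2 := H.hνT n
    push_cast
    nlinarith

theorem s_le_of_mem {t : ℝ} {j : ℕ} (h : s j ≤ t) : (j : ℝ) ≤ (t - s 0) / T := by
  have h1 := H.s_ge j
  rw [le_div_iff₀ H.hT]
  linarith

theorem bddAbove_set (t : ℝ) : BddAbove {j | s j ≤ t} := by
  rcases exists_nat_ge ((t - s 0) / T) with ⟨N, hN⟩
  refine ⟨N, fun j hj => ?_⟩
  have := H.s_le_of_mem hj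
  exact_mod_cast Nat.cast_le.mp (by push_cast; linarith : (j:ℝ) ≤ (N:ℝ))

theorem bidx_spec {t : ℝ} (ht : s 0 ≤ t) : s (bidx s t) ≤ t ∧ t < s (bidx s t + 1) := by
  have hne : {j | s j ≤ t}.Nonempty := ⟨0, ht⟩
  have hmem := Nat.sSup_mem hne (H.bddAbove_set t)
  refine ⟨hmem, ?_⟩
  by_contra h
  push_neg at h
  have : bidx s t + 1 ≤ bidx s t := le_csSup (H.bddAbove_set t) h
  omega

theorem bidx_eq {t : ℝ} {j : ℕ} (h1 : s j ≤ t) (h2 : t < s (j + 1)) : bidx s t = j := by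
  have hj : j ≤ bidx s t := le_csSup (H.bddAbove_set t) h1
  have ht : s 0 ≤ t := le_trans (H.s_mono.monotone (Nat.zero_le j)) h1
  have hspec := H.bidx_spec ht
  by_contra hne
  have : j + 1 ≤ bidx s t := by omega
  have := H.s_mono.monotone this
  linarith [hspec.1]

theorem bidx_of_lt {t : ℝ} (h : t < s 0) : bidx s t = 0 := by
  have : {j | s j ≤ t} = ∅ := by
    ext j; simp only [mem_setOf_eq, mem_empty_iff_false, iff_false, not_le]
    exact lt_of_lt_of_le h (H.s_mono.monotone (Nat.zero_le j))
  rw [bidx, this, csSup_empty]; rfl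

theorem btraj_eq {t : ℝ} {j : ℕ} (h1 : s j ≤ t) (h2 : t < s (j + 1)) :
    btraj g f₀ s ν t = bpar g f₀ s ν j t := by
  rw [btraj, H.bidx_eq h1 h2]

theorem bvel_eq {t : ℝ} {j : ℕ} (h1 : s j ≤ t) (h2 : t < s (j + 1)) :
    bvel g s ν t = ν j - g * (t - s j) := by
  rw [bvel, H.bidx_eq h1 h2]

theorem bpar_bounce (j : ℕ) : bpar g f₀ s ν j (s j) = f₀ := by simp [bpar]

theorem bpar_end (j : ℕ) : bpar g f₀ s ν j (s (j + 1)) = f₀ := by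
  have := H.hstep j
  have hg := H.hg.ne'
  rw [bpar, this]
  field_simp
  ring

theorem btraj_bounce (j : ℕ) : btraj g f₀ s ν (s j) = f₀ := by
  rw [H.btraj_eq le_rfl (H.s_lt_succ j), H.bpar_bounce]

theorem btraj_eqOn_Icc (j : ℕ) : EqOn (btraj g f₀ s ν) (bpar g f₀ s ν j)
    (Icc (s j) (s (j + 1))) := by
  intro t ht
  rcases eq_or_lt_of_le ht.2 with h | h
  · rw [h, H.btraj_bounce (j+1), H.bpar_end]
  · exact H.btraj_eq ht.1 h

theorem btraj_eqOn_Iic : EqOn (btraj g f₀ s ν) (bpar g f₀ s ν 0) (Iic (s 1)) := by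
  intro t ht
  rcases lt_or_ge t (s 0) with h | h
  · rw [btraj, H.bidx_of_lt h]
  · exact H.btraj_eqOn_Icc 0 ⟨h, ht⟩

theorem bpar_contDiff (j : ℕ) : Continuous (bpar g f₀ s ν j) := by
  unfold bpar; fun_prop

theorem bpar_hasDeriv (j : ℕ) (t : ℝ) :
    HasDerivAt (bpar g f₀ s ν j) (ν j - g * (t - s j)) t := by
  have h1 : HasDerivAt (fun u => u - s j) 1 t := (hasDerivAt_id t).sub_const _
  have h2 : HasDerivAt (fun u => f₀ + ν j * (u - s j) - g / 2 * (u - s j) ^ 2)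
      (0 + ν j * 1 - g / 2 * (2 * (t - s j) ^ 1 * 1)) t :=
    ((hasDerivAt_const t f₀).add (h1.const_mul (ν j))).sub ((h1.pow 2).const_mul (g/2))
  exact h2.congr_deriv (by ring)

theorem bvel_affine_hasDeriv (j : ℕ) (t : ℝ) :
    HasDerivAt (fun u => ν j - g * (u - s j)) (-g) t := by
  have h1 : HasDerivAt (fun u => u - s j) 1 t := (hasDerivAt_id t).sub_const _
  have h2 := (hasDerivAt_const t (ν j)).sub (h1.const_mul g)
  exact h2.congr_deriv (by ring)

theorem continuousWithinAt_of_Icc {a b t : ℝ} {j : ℕ} (hab : Icc a b ⊆ Icc (s j) (s (j+1)))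
    (ht : t ∈ Icc a b) : ContinuousWithinAt (btraj g f₀ s ν) (Icc a b) t :=
  ((H.bpar_contDiff j).continuousWithinAt).congr
    (fun u hu => H.btraj_eqOn_Icc j (hab hu)) (H.btraj_eqOn_Icc j (hab ht))

theorem btraj_continuous : Continuous (btraj g f₀ s ν) := by
  rw [continuous_iff_continuousAt]
  intro t
  rcases lt_or_ge t (s 1) with h | h
  · exact ((H.bpar_contDiff 0).continuousAt).congr
      (eventually_of_mem (Iio_mem_nhds h)
        fun u hu => (H.btraj_eqOn_Iic (mem_Iic.mpr (le_of_lt hu))).symm)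
  · have ht0 : s 0 ≤ t := le_trans (le_of_lt (H.s_lt_succ 0)) h
    obtain ⟨h1, h2⟩ := H.bidx_spec ht0
    set j := bidx s t with hj
    clear_value j
    rcases eq_or_lt_of_le h1 with he | hlt
    · -- t = s j, j ≥ 1
      have hj1 : 1 ≤ j := by
        by_contra hc
        push_neg at hc
        interval_cases j
        rw [← he] at h
        exact absurd h (not_le.mpr (H.s_lt_succ 0))
      obtain ⟨j', rfl⟩ : ∃ j', j = j' + 1 := ⟨j - 1, by omega⟩
      have hL : ContinuousWithinAt (btraj g f₀ s ν) (Iic t) t := by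
        have hcc := H.continuousWithinAt_of_Icc (t := t) (j := j') (subset_refl _)
          ⟨he ▸ (H.s_lt_succ j').le, he ▸ le_rfl⟩
        rw [ContinuousWithinAt] at hcc ⊢
        rw [he] at hcc
        rwa [nhdsWithin_Icc_eq_nhdsLE (he ▸ H.s_lt_succ j' : s j' < t)] at hcc
      have hR : ContinuousWithinAt (btraj g f₀ s ν) (Ici t) t := by
        have hcc := H.continuousWithinAt_of_Icc (t := t) (j := j' + 1) (subset_refl _)
          ⟨he ▸ le_rfl, le_of_lt (he ▸ H.s_lt_succ (j'+1))⟩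
        rw [ContinuousWithinAt] at hcc ⊢
        rw [he] at hcc
        rwa [nhdsWithin_Icc_eq_nhdsGE
          (he ▸ H.s_lt_succ (j'+1) : t < s (j'+1+1))] at hcc
      have := hL.union hR
      rwa [Iic_union_Ici, continuousWithinAt_univ] at this
    · exact ((H.bpar_contDiff j).continuousAt).congr
        (eventually_of_mem (Ioo_mem_nhds hlt h2)
          fun u hu => (H.btraj_eqOn_Icc j ⟨le_of_lt hu.1, le_of_lt hu.2⟩).symm)

/-- derivative off the bounce set -/
theorem hasDeriv_off {t : ℝ} (hne : ∀ j, t ≠ s j) :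
    HasDerivAt (btraj g f₀ s ν) (bvel g s ν t) t ∧ HasDerivAt (bvel g s ν) (-g) t := by
  rcases lt_trichotomy t (s 0) with h | h | h
  · have hmem : Iio (s 0) ∈ 𝓝 t := Iio_mem_nhds h
    have hb : bvel g s ν t = ν 0 - g * (t - s 0) := by rw [bvel, H.bidx_of_lt h]
    constructor
    · rw [Filter.EventuallyEq.hasDerivAt_iff (eventually_of_mem hmem
        (fun u hu => by rw [btraj, H.bidx_of_lt hu]))]
      rw [hb]; exact H.bpar_hasDeriv 0 t
    · rw [Filter.EventuallyEq.hasDerivAt_iff (eventually_of_mem hmem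
        (fun u hu => by rw [bvel, H.bidx_of_lt hu]))]
      exact H.bvel_affine_hasDeriv 0 t
  · exact absurd h (hne 0)
  · have ht0 : s 0 ≤ t := le_of_lt h
    obtain ⟨h1, h2⟩ := H.bidx_spec ht0
    set j := bidx s t with hj
    have hlt : s j < t := lt_of_le_of_ne h1 (fun hc => hne j hc.symm)
    have hmem : Ioo (s j) (s (j+1)) ∈ 𝓝 t := Ioo_mem_nhds hlt h2
    have hb : bvel g s ν t = ν j - g * (t - s j) := rfl
    constructor
    · rw [Filter.EventuallyEq.hasDerivAt_iff (eventually_of_mem hmem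
        (fun u hu => H.btraj_eq (le_of_lt hu.1) hu.2))]
      rw [bvel]; exact H.bpar_hasDeriv j t
    · rw [Filter.EventuallyEq.hasDerivAt_iff (eventually_of_mem hmem
        (fun u hu => H.bvel_eq (le_of_lt hu.1) hu.2))]
      exact H.bvel_affine_hasDeriv j t

theorem bvel_continuousAt {t : ℝ} (hne : ∀ j, t ≠ s j) : ContinuousAt (bvel g s ν) t :=
  (H.hasDeriv_off hne).2.continuousAt

/-- right limit of velocity at a bounce -/
theorem bvel_tendsto_right (j : ℕ) :
    Tendsto (bvel g s ν) (𝓝[>] (s j)) (𝓝 (ν j)) := by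
  have hmem : Ioo (s j) (s (j+1)) ∈ 𝓝[>] (s j) :=
    Ioo_mem_nhdsGT_of_mem ⟨le_rfl, H.s_lt_succ j⟩
  have hcont : Tendsto (fun u => ν j - g * (u - s j)) (𝓝[>] (s j)) (𝓝 (ν j)) := by
    have hc : Continuous (fun u => ν j - g * (u - s j)) := by fun_prop
    have := (hc.tendsto (s j)).mono_left (nhdsWithin_le_nhds : 𝓝[>] (s j) ≤ 𝓝 (s j))
    simpa using this
  exact hcont.congr' (eventually_of_mem hmem
    (fun u hu => (H.bvel_eq (le_of_lt hu.1) hu.2).symm))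

/-- left limit of velocity at the end of a flight -/
theorem bvel_tendsto_left (j : ℕ) :
    Tendsto (bvel g s ν) (𝓝[<] (s (j + 1))) (𝓝 (-(ν j))) := by
  have hmem : Ioo (s j) (s (j+1)) ∈ 𝓝[<] (s (j+1)) :=
    Ioo_mem_nhdsLT_of_mem ⟨H.s_lt_succ j, le_rfl⟩
  have hval : ν j - g * (s (j+1) - s j) = -(ν j) := by
    rw [H.hstep j]
    have hg := H.hg.ne'
    field_simp
    ring
  have hcont : Tendsto (fun u => ν j - g * (u - s j)) (𝓝[<] (s (j+1))) (𝓝 (-(ν j))) := by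
    have hc : Continuous (fun u => ν j - g * (u - s j)) := by fun_prop
    have := (hc.tendsto (s (j+1))).mono_left (nhdsWithin_le_nhds : 𝓝[<] (s (j+1)) ≤ 𝓝 (s (j+1)))
    rw [hval] at this
    exact this
  exact hcont.congr' (eventually_of_mem hmem
    (fun u hu => (H.bvel_eq (le_of_lt hu.1) hu.2).symm))

/-- strictly above the plate in the interior of a flight -/
theorem btraj_gt {t : ℝ} {j : ℕ} (h1 : s j < t) (h2 : t < s (j + 1)) :
    f t < btraj g f₀ s ν t := by
  rw [H.btraj_eq (le_of_lt h1) h2, bpar]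
  set τ := t - s j with hτ
  clear_value τ
  have hτ0 : 0 < τ := by rw [hτ]; linarith
  have hflight : τ < 2 * ν j / g := by
    have := H.hstep j
    simp only [hτ]; linarith
  have hA1 : f t - f₀ ≤ L * τ := by
    have := H.hLip t (s j)
    rw [H.hfs j] at this
    have habs : |t - s j| = τ := by rw [← hτ]; exact abs_of_pos hτ0
    calc f t - f₀ ≤ |f t - f₀| := le_abs_self _
    _ ≤ L * |t - s j| := this
    _ = L * τ := by rw [habs]
  have hA2 : f t - f₀ ≤ L * (2 * ν j / g - τ) := by
    have := H.hLip t (s (j+1))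
    rw [H.hfs (j+1)] at this
    have hd : s (j+1) - t = 2 * ν j / g - τ := by
      have := H.hstep j; simp only [hτ]; linarith
    have habs : |t - s (j+1)| = 2 * ν j / g - τ := by
      rw [abs_sub_comm, abs_of_pos (by linarith)]
      linarith
    calc f t - f₀ ≤ |f t - f₀| := le_abs_self _
    _ ≤ L * |t - s (j+1)| := this
    _ = L * (2 * ν j / g - τ) := by rw [habs]
  have hg := H.hg
  have hL := H.hL
  have hνL := H.hνL j
  have hν := H.νpos j
  have key : f t - f₀ < ν j * τ - g / 2 * τ ^ 2 := by
    rcases le_or_gt τ (ν j / g) with hhalf | hhalf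
    · have hm : τ * g ≤ ν j := (le_div_iff₀ hg).mp hhalf
      have hstep1 : L * τ < ν j / 2 * τ := by
        nlinarith [mul_pos (show (0:ℝ) < ν j / 2 - L by linarith) hτ0]
      have hstep2 : ν j / 2 * τ ≤ ν j * τ - g / 2 * τ ^ 2 := by
        nlinarith [mul_nonneg hτ0.le (show (0:ℝ) ≤ ν j - τ * g by linarith)]
      linarith [hA1]
    · have hm : ν j < τ * g := (div_lt_iff₀ hg).mp hhalf
      have hrem : 0 < 2 * ν j / g - τ := by linarith
      have hstep1 : L * (2 * ν j / g - τ) < ν j / 2 * (2 * ν j / g - τ) := by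
        nlinarith [mul_pos (show (0:ℝ) < ν j / 2 - L by linarith) hrem]
      have hstep2 : ν j / 2 * (2 * ν j / g - τ) ≤ ν j * τ - g / 2 * τ ^ 2 := by
        have h2 : ν j * τ - g / 2 * τ ^ 2 = g / 2 * τ * (2 * ν j / g - τ) := by
          field_simp
        rw [h2]
        exact mul_le_mul_of_nonneg_right (by linarith) hrem.le
      linarith [hA2]
  linarith

theorem btraj_ge {t : ℝ} (ht : s 0 ≤ t) : f t ≤ btraj g f₀ s ν t := by
  obtain ⟨h1, h2⟩ := H.bidx_spec ht
  rcases eq_or_lt_of_le h1 with he | hlt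
  · rw [← he, H.btraj_bounce, ← H.hfs (bidx s t), he]
  · exact le_of_lt (H.btraj_gt hlt h2)

/-- contact characterization -/
theorem contact_iff {t : ℝ} (ht : s 0 ≤ t) :
    btraj g f₀ s ν t = f t ↔ ∃ j, t = s j := by
  constructor
  · intro he
    obtain ⟨h1, h2⟩ := H.bidx_spec ht
    rcases eq_or_lt_of_le h1 with he' | hlt
    · exact ⟨_, he'.symm⟩
    · exact absurd he (ne_of_gt (H.btraj_gt hlt h2))
  · rintro ⟨j, rfl⟩
    rw [H.btraj_bounce, H.hfs]

/-- global upper bound when speeds are bounded -/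
theorem btraj_le {w : ℝ} (hw : ∀ j, ν j ≤ w) (t : ℝ) :
    btraj g f₀ s ν t ≤ f₀ + w ^ 2 / (2 * g) := by
  rw [btraj, bpar]
  set j := bidx s t with hj
  clear_value j
  set τ := t - s j with hτ
  clear_value τ
  have hg := H.hg
  have hν := H.νpos j
  have hwj := hw j
  have h1 : ν j * τ - g / 2 * τ ^ 2 ≤ ν j ^ 2 / (2 * g) := by
    rw [le_div_iff₀ (by linarith : (0:ℝ) < 2 * g)]
    nlinarith [sq_nonneg (ν j - g * τ)]
  have h2 : ν j ^ 2 / (2 * g) ≤ w ^ 2 / (2 * g) := by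
    gcongr <;> nlinarith
  linarith

/-- apex of a flight -/
theorem btraj_apex (j : ℕ) :
    btraj g f₀ s ν (s j + ν j / g) = f₀ + ν j ^ 2 / (2 * g) := by
  have hg := H.hg
  have hν := H.νpos j
  have hd : 0 < ν j / g := div_pos hν hg
  have h1 : s j ≤ s j + ν j / g := by linarith
  have h2 : s j + ν j / g < s (j + 1) := by
    rw [H.hstep j]
    have : ν j / g < 2 * ν j / g := by
      rw [div_lt_div_iff₀ hg hg]
      nlinarith
    linarith
  rw [H.btraj_eq h1 h2, bpar]
  field_simp
  ring

/-- speed bound within a flight -/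
theorem bvel_abs_le {t : ℝ} {j : ℕ} (h1 : s j ≤ t) (h2 : t < s (j + 1)) :
    |bvel g s ν t| ≤ ν j := by
  rw [H.bvel_eq h1 h2]
  have hg := H.hg
  have hflight : t - s j < 2 * ν j / g := by have := H.hstep j; linarith
  have hm := (lt_div_iff₀ hg).mp hflight
  rw [abs_le]
  constructor
  · nlinarith
  · nlinarith

/-- speed squared identity -/
theorem bvel_sq {t : ℝ} {j : ℕ} (h1 : s j ≤ t) (h2 : t < s (j + 1)) :
    bvel g s ν t ^ 2 = ν j ^ 2 - 2 * g * (btraj g f₀ s ν t - f₀) := by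
  rw [H.bvel_eq h1 h2, H.btraj_eq h1 h2, bpar]
  ring

/-- discreteness of the bounce set -/
theorem s_discrete (t : ℝ) : ∃ ε > (0:ℝ), ∀ j, |s j - t| < ε → s j = t := by
  rcases exists_nat_ge ((t + 1 - s 0) / T) with ⟨N, hN⟩
  have hT := H.hT
  have hbig : ∀ j, N ≤ j → t + 1 ≤ s j := by
    intro j hj
    have h1 := H.s_ge j
    have h2 : (N:ℝ) ≤ j := by exact_mod_cast hj
    have h3 := (div_le_iff₀ hT).mp hN
    nlinarith
  classical
  set F := (Finset.range N).filter (fun j => s j ≠ t) with hF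
  set E := insert (1:ℝ) (F.image (fun j => |s j - t|)) with hE
  have hEne : E.Nonempty := ⟨1, Finset.mem_insert_self _ _⟩
  refine ⟨E.min' hEne, ?_, ?_⟩
  · have hmem := E.min'_mem hEne
    rcases Finset.mem_insert.mp hmem with h | h
    · rw [h]; norm_num
    · obtain ⟨j, hj, hval⟩ := Finset.mem_image.mp h
      rw [← hval]
      have : s j ≠ t := (Finset.mem_filter.mp hj).2
      exact abs_pos.mpr (sub_ne_zero.mpr this)
  · intro j hj
    by_contra hne
    rcases lt_or_ge j N with h | h
    · have hjF : j ∈ F := Finset.mem_filter.mpr ⟨Finset.mem_range.mpr h, hne⟩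
      have : |s j - t| ∈ E := Finset.mem_insert_of_mem
        (Finset.mem_image.mpr ⟨j, hjF, rfl⟩)
      exact absurd hj (not_lt.mpr (E.min'_le _ this))
    · have h1 := hbig j h
      have h2 : (1:ℝ) ≤ |s j - t| := by
        rw [abs_of_pos (by linarith)]
        linarith
      have h3 : E.min' hEne ≤ 1 := E.min'_le _ (Finset.mem_insert_self _ _)
      linarith

end TrajHyp

/-- enumeration of a closed, discrete, unbounded-above, bounded-below subset of `ℝ` -/
theorem exists_enum {S : Set ℝ} (hcl : IsClosed S) (hbd : BddBelow S)
    (hub : ∀ x : ℝ, ∃ y ∈ S, x < y)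
    (hdisc : ∀ t : ℝ, ∃ ε > (0:ℝ), ∀ u ∈ S, |u - t| < ε → u = t) :
    ∃ σ : ℕ → ℝ, StrictMono σ ∧ (∀ i, σ i ∈ S) ∧ (∀ x ∈ S, ∃ i, σ i = x) ∧
      Tendsto σ atTop atTop := by
  have hne : S.Nonempty := by obtain ⟨y, hy, _⟩ := hub 0; exact ⟨y, hy⟩
  have hstep : ∀ x : ℝ, sInf (S ∩ Ioi x) ∈ S ∩ Ioi x := by
    intro x
    obtain ⟨y, hy, hxy⟩ := hub x
    have hne' : (S ∩ Ioi x).Nonempty := ⟨y, hy, hxy⟩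
    have hbd' : BddBelow (S ∩ Ioi x) := ⟨x, fun z hz => le_of_lt hz.2⟩
    have hmemS : sInf (S ∩ Ioi x) ∈ S := by
      have h1 : sInf (S ∩ Ioi x) ∈ closure (S ∩ Ioi x) := csInf_mem_closure hne' hbd'
      have h2 : closure (S ∩ Ioi x) ⊆ closure S := closure_mono inter_subset_left
      rw [hcl.closure_eq] at h2
      exact h2 h1
    have hge : x ≤ sInf (S ∩ Ioi x) := le_csInf hne' (fun z hz => le_of_lt hz.2)
    refine ⟨hmemS, ?_⟩
    rcases eq_or_lt_of_le hge with heq | hlt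
    · exfalso
      obtain ⟨ε, hε, hd⟩ := hdisc x
      obtain ⟨a, ha, halt⟩ := exists_lt_of_csInf_lt hne'
        (show sInf (S ∩ Ioi x) < x + ε by rw [← heq]; linarith)
      have hax : x < a := ha.2
      have : a = x := hd a ha.1 (by rw [abs_of_pos (by linarith)]; linarith)
      linarith [this ▸ hax]
    · exact hlt
  set σ : ℕ → ℝ := fun n => Nat.rec (sInf S) (fun _ ih => sInf (S ∩ Ioi ih)) n with hσ
  have hσ0 : σ 0 = sInf S := rfl
  have hσs : ∀ n, σ (n + 1) = sInf (S ∩ Ioi (σ n)) := fun n => rfl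
  have hmem : ∀ n, σ n ∈ S := by
    intro n
    induction n with
    | zero => exact hcl.csInf_mem hne hbd
    | succ m _ => rw [hσs]; exact (hstep (σ m)).1
  have hmono : StrictMono σ := strictMono_nat_of_lt_succ (fun n => (hstep (σ n)).2)
  have htends : Tendsto σ atTop atTop := by
    rcases em (BddAbove (range σ)) with hbdd | hbdd
    · exfalso
      have hl := tendsto_atTop_ciSup hmono.monotone hbdd
      set ℓ := ⨆ n, σ n
      obtain ⟨ε, hε, hd⟩ := hdisc ℓ
      have hev : ∀ᶠ n in atTop, σ n ∈ Ioo (ℓ - ε) (ℓ + ε) :=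
        hl.eventually (Ioo_mem_nhds (by linarith) (by linarith))
      obtain ⟨N, hN⟩ := hev.exists_forall_of_atTop
      have h1 : σ N = ℓ := hd _ (hmem N) (by
        have := hN N le_rfl
        rw [abs_lt]; constructor <;> [linarith [this.1]; linarith [this.2]])
      have h2 : σ (N + 1) = ℓ := hd _ (hmem (N + 1)) (by
        have := hN (N + 1) (by omega)
        rw [abs_lt]; constructor <;> [linarith [this.1]; linarith [this.2]])
      have := hmono (show N < N + 1 by omega)
      rw [h1, h2] at this
      exact lt_irrefl _ this
    · exact tendsto_atTop_atTop_of_monotone' hmono.monotone hbdd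
  refine ⟨σ, hmono, hmem, ?_, htends⟩
  intro x hx
  have hex : ∃ n, x ≤ σ n := (htends.eventually (eventually_ge_atTop x)).exists
  obtain ⟨n, hn, hmin⟩ : ∃ n, x ≤ σ n ∧ ∀ m, m < n → ¬ x ≤ σ m :=
    ⟨Nat.find hex, Nat.find_spec hex, fun m hm => Nat.find_min hex hm⟩
  rcases n with _ | m
  · refine ⟨0, le_antisymm ?_ hn⟩
    rw [hσ0]; exact csInf_le hbd hx
  · have hmlt : σ m < x := lt_of_not_ge (hmin m (by omega))
    refine ⟨m + 1, le_antisymm ?_ hn⟩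
    rw [hσs]
    exact csInf_le ⟨σ m, fun z hz => le_of_lt hz.2⟩ ⟨hx, hmlt⟩

structure Setup (g T : ℝ) (f : ℝ → ℝ) : Type where
  K : ℕ
  N₁ : ℕ
  K₁ : ℕ
  t₀ : ℝ
  u₀ : ℝ
  L : ℝ
  hg : 0 < g
  hT : 0 < T
  hK : 0 < K
  hfc : Continuous f
  hL : 0 ≤ L
  hLip : ∀ a b, |f a - f b| ≤ L * |a - b|
  hper : Function.Periodic f T
  hdper : Function.Periodic (deriv f) T
  hdt₀ : deriv f t₀ = K * T * g / 2
  hdu₀ : deriv f u₀ = 0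
  hu₀ : u₀ ∈ Set.Ioo t₀ (t₀ + T)
  hK₁L : L < g * T * K₁ / 2
  hN₁L : L < g * T * N₁ / 2
  hC2 : f u₀ + (g * T * K₁) ^ 2 / (2 * g) < f t₀ + (g * T * N₁) ^ 2 / (2 * g)

namespace Setup

variable {g T : ℝ} {f : ℝ → ℝ} (S : Setup g T f)

noncomputable def ιy (j : ℕ) : ℤ :=
  -⌈S.t₀ / T⌉ + ∑ i ∈ Finset.range j, (2 * (S.N₁ + S.K * i) : ℤ)

noncomputable def sy (j : ℕ) : ℝ := S.t₀ + T * S.ιy j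

noncomputable def νy (j : ℕ) : ℝ := g * T * (S.N₁ + S.K * j)

noncomputable def ιz (l : ℕ) : ℤ := -⌈S.u₀ / T⌉ + l * (2 * S.K₁)

noncomputable def sz (l : ℕ) : ℝ := S.u₀ + T * S.ιz l

noncomputable def νz (l : ℕ) : ℝ := g * T * S.K₁

theorem N₁_pos : 0 < S.N₁ := by
  by_contra h
  push_neg at h
  interval_cases h' : S.N₁
  · have := S.hN₁L
    rw [h'] at this
    push_cast at this
    have := S.hL
    linarith [this]

theorem K₁_pos : 0 < S.K₁ := by
  by_contra h
  push_neg at h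
  interval_cases h' : S.K₁
  · have := S.hK₁L
    rw [h'] at this
    push_cast at this
    have := S.hL
    linarith [this]

theorem cast_le_add (j : ℕ) : (S.N₁ : ℝ) ≤ (S.N₁ : ℝ) + S.K * j :=
  le_add_of_nonneg_right (by positivity)

theorem νy_ge (j : ℕ) : g * T * S.N₁ ≤ S.νy j := by
  rw [νy]
  have hg := S.hg; have hT := S.hT
  nlinarith [S.cast_le_add j, mul_pos hg hT]

theorem HY : TrajHyp g T S.L (f S.t₀) f S.sy S.νy := by
  constructor
  · exact S.hg
  · exact S.hT
  · exact S.hL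
  · exact S.hLip
  · intro j
    rw [sy, mul_comm T _]
    exact S.hper.int_mul (S.ιy j) S.t₀
  · intro j
    rw [sy, sy, ιy, ιy, Finset.sum_range_succ, νy]
    have hg := S.hg.ne'
    push_cast
    field_simp
    ring
  · intro j
    have h := S.hN₁L
    have hg := S.hg; have hT := S.hT
    rw [νy]
    nlinarith [S.cast_le_add j, mul_pos hg hT]
  · intro j
    have hg := S.hg; have hT := S.hT
    have hN := S.N₁_pos
    rw [νy, le_div_iff₀ hg]
    have h0 : (1:ℝ) ≤ (S.N₁:ℝ) := by exact_mod_cast hN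
    have h1 : (1:ℝ) ≤ (S.N₁:ℝ) + S.K * j := le_trans h0 (S.cast_le_add j)
    have h2 := mul_pos hg hT
    nlinarith [mul_le_mul_of_nonneg_left h1 h2.le]



theorem HZ : TrajHyp g T S.L (f S.u₀) f S.sz S.νz := by
  constructor
  · exact S.hg
  · exact S.hT
  · exact S.hL
  · exact S.hLip
  · intro l
    rw [sz, mul_comm T _]
    exact S.hper.int_mul (S.ιz l) S.u₀
  · intro l
    rw [sz, sz, ιz, ιz, νz]
    have hg := S.hg.ne'
    push_cast
    field_simp
    ring
  · intro l
    have h := S.hK₁L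
    rw [νz]
    linarith
  · intro l
    have hg := S.hg; have hT := S.hT
    have hK := S.K₁_pos
    rw [νz, le_div_iff₀ hg]
    have h0 : (1:ℝ) ≤ (S.K₁:ℝ) := by exact_mod_cast hK
    have h2 := mul_pos hg hT
    nlinarith [mul_le_mul_of_nonneg_left h0 h2.le]

theorem sy0_le : S.sy 0 ≤ 0 := by
  rw [sy, ιy]
  simp only [Finset.range_zero, Finset.sum_empty, add_zero]
  have h := Int.le_ceil (S.t₀ / T)
  have hT := S.hT
  have := (div_le_iff₀ hT).mp h
  push_cast
  nlinarith

theorem sz0_le : S.sz 0 ≤ 0 := by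
  rw [sz, ιz]
  simp only [Nat.cast_zero, zero_mul, add_zero]
  have h := Int.le_ceil (S.u₀ / T)
  have hT := S.hT
  have := (div_le_iff₀ hT).mp h
  push_cast
  nlinarith

theorem phase_ne (a b : ℤ) : S.t₀ + T * a ≠ S.u₀ + T * b := by
  intro h
  have hT := S.hT
  obtain ⟨h1, h2⟩ := S.hu₀
  have hk : S.u₀ - S.t₀ = T * ((a : ℝ) - b) := by linarith
  have hpos : (0:ℝ) < (a:ℝ) - b := by
    by_contra hc
    push_neg at hc
    nlinarith
  have hlt : ((a:ℝ) - b) < 1 := by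
    by_contra hc
    push_neg at hc
    nlinarith
  have hz : (0:ℤ) < a - b := by exact_mod_cast (by push_cast; linarith : (0:ℝ) < ((a - b : ℤ) : ℝ))
  have hz2 : (a - b : ℤ) < 1 := by exact_mod_cast (by push_cast; linarith : ((a - b : ℤ) : ℝ) < 1)
  omega

theorem sy_ne_sz (j l : ℕ) : S.sy j ≠ S.sz l := S.phase_ne (S.ιy j) (S.ιz l)

/-- apex times -/
noncomputable def ay (j : ℕ) : ℝ := S.sy j + S.νy j / g

noncomputable def az (l : ℕ) : ℝ := S.sz l + S.νz l / g

theorem ay_eq (j : ℕ) : S.ay j = S.t₀ + T * ((S.ιy j + (S.N₁ + S.K * j) : ℤ) : ℝ) := by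
  rw [ay, sy, νy]
  have hg := S.hg.ne'
  push_cast
  field_simp
  ring

theorem az_eq (l : ℕ) : S.az l = S.u₀ + T * ((S.ιz l + S.K₁ : ℤ) : ℝ) := by
  rw [az, sz, νz]
  have hg := S.hg.ne'
  push_cast
  field_simp
  ring

theorem ay_ne_az (j l : ℕ) : S.ay j ≠ S.az l := by
  rw [S.ay_eq j, S.az_eq l]
  exact S.phase_ne _ _

/-! ### the two trajectories -/

noncomputable def Y : ℝ → ℝ := btraj g (f S.t₀) S.sy S.νy
noncomputable def Yv : ℝ → ℝ := bvel g S.sy S.νy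
noncomputable def Z : ℝ → ℝ := btraj g (f S.u₀) S.sz S.νz
noncomputable def Zv : ℝ → ℝ := bvel g S.sz S.νz

noncomputable def zmax : ℝ := f S.u₀ + (g * T * S.K₁) ^ 2 / (2 * g)

theorem Y_cont : Continuous S.Y := S.HY.btraj_continuous
theorem Z_cont : Continuous S.Z := S.HZ.btraj_continuous

theorem Z_le_zmax (t : ℝ) : S.Z t ≤ S.zmax := S.HZ.btraj_le (fun _ => le_rfl) t

theorem sy_lt_of_index {j : ℕ} (hj : 1 ≤ j) : 0 < S.sy j := by
  have h1 : S.sy 1 ≤ S.sy j := S.HY.s_mono.monotone hj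
  have h2 : S.sy 0 + 1 * T ≤ S.sy 1 := by
    have := S.HY.s_ge 1
    push_cast at this
    linarith
  have h3 := S.HY.hstep 0
  have h4 := S.HY.hνT 0
  have h0 := S.sy0_le
  have hT := S.hT
  -- sy 1 = sy 0 + 2ν₀/g ≥ sy 0 + 2T ≥ -T + 2T?  we only know sy 0 ∈ (-T, 0]
  have h5 : -T < S.sy 0 := by
    rw [sy, ιy]
    simp only [Finset.range_zero, Finset.sum_empty, add_zero]
    have h := Int.ceil_lt_add_one (S.t₀ / T)
    have h' := (mul_lt_mul_iff_right₀ hT).mpr h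
    have ht' : T * (S.t₀ / T) = S.t₀ := by field_simp
    push_cast
    nlinarith [h', ht']
  have h6 : S.sy 0 + 2 * S.νy 0 / g ≤ S.sy 1 := le_of_eq (S.HY.hstep 0).symm
  have h7 : T ≤ 2 * S.νy 0 / g := S.HY.hνT 0
  -- νy 0 = g T N₁ ≥ g T, so 2ν₀/g = 2 T N₁ ≥ 2T
  have hN := S.N₁_pos
  have hg := S.hg
  have h8 : 2 * T ≤ 2 * S.νy 0 / g := by
    rw [le_div_iff₀ hg]
    have h0' : (1:ℝ) ≤ (S.N₁:ℝ) := by exact_mod_cast hN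
    have hge := S.νy_ge 0
    have h2' := mul_pos hg hT
    nlinarith [mul_le_mul_of_nonneg_left h0' h2'.le]
  calc (0:ℝ) < -T + 2 * T := by linarith
  _ < S.sy 0 + 2 * S.νy 0 / g := by linarith
  _ = S.sy 1 := (S.HY.hstep 0).symm
  _ ≤ S.sy j := h1

theorem sz_lt_of_index {l : ℕ} (hl : 1 ≤ l) : 0 < S.sz l := by
  have h1 : S.sz 1 ≤ S.sz l := S.HZ.s_mono.monotone hl
  have hT := S.hT
  have h5 : -T < S.sz 0 := by
    rw [sz, ιz]
    simp only [Nat.cast_zero, zero_mul, add_zero]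
    have h := Int.ceil_lt_add_one (S.u₀ / T)
    have h' := (mul_lt_mul_iff_right₀ hT).mpr h
    have ht' : T * (S.u₀ / T) = S.u₀ := by field_simp
    push_cast
    nlinarith [h', ht']
  have hK := S.K₁_pos
  have hg := S.hg
  have h8 : 2 * T ≤ 2 * S.νz 0 / g := by
    rw [νz, le_div_iff₀ hg]
    have h0' : (1:ℝ) ≤ (S.K₁:ℝ) := by exact_mod_cast hK
    have h2' := mul_pos hg hT
    nlinarith [mul_le_mul_of_nonneg_left h0' h2'.le]

  calc (0:ℝ) < -T + 2 * T := by linarith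
  _ < S.sz 0 + 2 * S.νz 0 / g := by linarith
  _ = S.sz 1 := (S.HZ.hstep 0).symm
  _ ≤ S.sz l := h1

theorem Y_bounce (j : ℕ) : S.Y (S.sy j) = f (S.sy j) := by
  unfold Y
  rw [S.HY.btraj_bounce j]
  exact (S.HY.hfs j).symm

theorem Z_bounce (l : ℕ) : S.Z (S.sz l) = f (S.sz l) := by
  unfold Z
  rw [S.HZ.btraj_bounce l]
  exact (S.HZ.hfs l).symm

theorem Y_ge_f {t : ℝ} (ht : 0 ≤ t) : f t ≤ S.Y t :=
  S.HY.btraj_ge (le_trans S.sy0_le ht)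

theorem Z_ge_f {t : ℝ} (ht : 0 ≤ t) : f t ≤ S.Z t :=
  S.HZ.btraj_ge (le_trans S.sz0_le ht)

theorem Y_contact_iff {t : ℝ} (ht : 0 ≤ t) : S.Y t = f t ↔ ∃ j, t = S.sy j :=
  S.HY.contact_iff (le_trans S.sy0_le ht)

theorem Z_contact_iff {t : ℝ} (ht : 0 ≤ t) : S.Z t = f t ↔ ∃ l, t = S.sz l :=
  S.HZ.contact_iff (le_trans S.sz0_le ht)

theorem not_both_contact {t : ℝ} (ht : 0 ≤ t) : ¬(S.Y t = f t ∧ S.Z t = f t) := by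
  rintro ⟨hY, hZ⟩
  obtain ⟨j, rfl⟩ := (S.Y_contact_iff ht).mp hY
  obtain ⟨l, hl⟩ := (S.Z_contact_iff ht).mp hZ
  exact S.sy_ne_sz j l hl

/-- at a `Y`-bounce with nonneg time, `Z` is strictly above `Y` nearby -/
theorem ybounce_ev (j : ℕ) (h0 : 0 ≤ S.sy j) : ∀ᶠ u in 𝓝 (S.sy j), S.Y u < S.Z u := by
  have hYb : S.Y (S.sy j) = f (S.sy j) := S.Y_bounce j
  have hZf : f (S.sy j) ≤ S.Z (S.sy j) := S.Z_ge_f h0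
  have hne : S.Z (S.sy j) ≠ f (S.sy j) := by
    intro h
    exact S.not_both_contact h0 ⟨hYb, h⟩
  have h : S.Y (S.sy j) < S.Z (S.sy j) := by
    rw [hYb]
    exact lt_of_le_of_ne hZf (Ne.symm hne)
  exact (isOpen_lt S.Y_cont S.Z_cont).mem_nhds h

theorem zbounce_ev (l : ℕ) (h0 : 0 ≤ S.sz l) : ∀ᶠ u in 𝓝 (S.sz l), S.Z u < S.Y u := by
  have hZb : S.Z (S.sz l) = f (S.sz l) := S.Z_bounce l
  have hYf : f (S.sz l) ≤ S.Y (S.sz l) := S.Y_ge_f h0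
  have hne : S.Y (S.sz l) ≠ f (S.sz l) := by
    intro h
    exact S.not_both_contact h0 ⟨h, hZb⟩
  have h : S.Z (S.sz l) < S.Y (S.sz l) := by
    rw [hZb]
    exact lt_of_le_of_ne hYf (Ne.symm hne)
  exact (isOpen_lt S.Z_cont S.Y_cont).mem_nhds h

/-- a crossing is interior to flights of both trajectories -/
theorem crossing_piece {t : ℝ} (ht : 0 ≤ t) (hYZ : S.Y t = S.Z t) :
    ∃ j l, S.sy j < t ∧ t < S.sy (j + 1) ∧ S.sz l < t ∧ t < S.sz (l + 1) := by
  have hty : S.sy 0 ≤ t := le_trans S.sy0_le ht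
  have htz : S.sz 0 ≤ t := le_trans S.sz0_le ht
  obtain ⟨hy1, hy2⟩ := S.HY.bidx_spec hty
  obtain ⟨hz1, hz2⟩ := S.HZ.bidx_spec htz
  refine ⟨_, _, lt_of_le_of_ne hy1 ?_, hy2, lt_of_le_of_ne hz1 ?_, hz2⟩
  · intro heq
    have hYb : S.Y t = f t := by
      rw [← heq]
      exact S.Y_bounce _
    have hZb : S.Z t = f t := by rw [← hYZ]; exact hYb
    exact S.not_both_contact ht ⟨hYb, hZb⟩
  · intro heq
    have hZb : S.Z t = f t := by
      rw [← heq]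
      exact S.Z_bounce _
    have hYb : S.Y t = f t := by rw [hYZ]; exact hZb
    exact S.not_both_contact ht ⟨hYb, hZb⟩

/-- affine difference on overlapping pieces -/
theorem diff_affine (j l : ℕ) : ∃ c₀ : ℝ,
    ∀ t, t ∈ Icc (S.sy j) (S.sy (j + 1)) → t ∈ Icc (S.sz l) (S.sz (l + 1)) →
      S.Y t - S.Z t = g * (S.ay j - S.az l) * t + c₀ := by
  refine ⟨(f S.t₀ - S.νy j * S.sy j - g / 2 * S.sy j ^ 2) -
    (f S.u₀ - S.νz l * S.sz l - g / 2 * S.sz l ^ 2), fun t h1 h2 => ?_⟩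
  have e1 : S.Y t = bpar g (f S.t₀) S.sy S.νy j t := S.HY.btraj_eqOn_Icc j h1
  have e2 : S.Z t = bpar g (f S.u₀) S.sz S.νz l t := S.HZ.btraj_eqOn_Icc l h2
  rw [e1, e2, bpar, bpar, ay, az]
  have hg := S.hg.ne'
  field_simp
  ring

theorem slope_ne (j l : ℕ) : g * (S.ay j - S.az l) ≠ 0 := by
  have h := S.ay_ne_az j l
  have hg := S.hg.ne'
  intro hc
  rcases mul_eq_zero.mp hc with h' | h'
  · exact hg h'
  · exact h (by linarith)

/-! ### velocities of upper and lower ball -/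

noncomputable def v1 : ℝ → ℝ := fun t => if S.Z t ≤ S.Y t then S.Yv t else S.Zv t
noncomputable def v2 : ℝ → ℝ := fun t => if S.Z t ≤ S.Y t then S.Zv t else S.Yv t

theorem v1_eq_Yv {t : ℝ} (h : S.Z t ≤ S.Y t) : S.v1 t = S.Yv t := if_pos h
theorem v1_eq_Zv {t : ℝ} (h : S.Y t < S.Z t) : S.v1 t = S.Zv t := if_neg (not_le.mpr h)
theorem v2_eq_Zv {t : ℝ} (h : S.Z t ≤ S.Y t) : S.v2 t = S.Zv t := if_pos h
theorem v2_eq_Yv {t : ℝ} (h : S.Y t < S.Z t) : S.v2 t = S.Yv t := if_neg (not_le.mpr h)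

theorem ne_sy {t : ℝ} {j : ℕ} (h1 : S.sy j < t) (h2 : t < S.sy (j + 1)) :
    ∀ i, t ≠ S.sy i := by
  intro i heq
  rcases le_or_gt i j with h | h
  · exact absurd (heq ▸ S.HY.s_mono.monotone h : S.sy i ≤ S.sy j) (not_le.mpr (heq ▸ h1))
  · exact absurd (heq ▸ S.HY.s_mono.monotone h : S.sy (j+1) ≤ S.sy i) (not_le.mpr (heq ▸ h2))

theorem ne_sz {t : ℝ} {l : ℕ} (h1 : S.sz l < t) (h2 : t < S.sz (l + 1)) :
    ∀ i, t ≠ S.sz i := by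
  intro i heq
  rcases le_or_gt i l with h | h
  · exact absurd (heq ▸ S.HZ.s_mono.monotone h : S.sz i ≤ S.sz l) (not_le.mpr (heq ▸ h1))
  · exact absurd (heq ▸ S.HZ.s_mono.monotone h : S.sz (l+1) ≤ S.sz i) (not_le.mpr (heq ▸ h2))

theorem crossing_limits {t : ℝ} (ht : 0 ≤ t) (hYZ : S.Y t = S.Z t) :
    ∃ A B, Tendsto S.v1 (𝓝[<] t) (𝓝 A) ∧ Tendsto S.v2 (𝓝[<] t) (𝓝 B) ∧
      Tendsto S.v1 (𝓝[>] t) (𝓝 B) ∧ Tendsto S.v2 (𝓝[>] t) (𝓝 A) ∧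
      (A = S.Yv t ∨ A = S.Zv t) ∧ (B = S.Yv t ∨ B = S.Zv t) := by
  obtain ⟨j, l, hj1, hj2, hl1, hl2⟩ := S.crossing_piece ht hYZ
  obtain ⟨c₀, hc₀⟩ := S.diff_affine j l
  have hcne := S.slope_ne j l
  set c := g * (S.ay j - S.az l) with hc
  set α := max (S.sy j) (S.sz l) with hα
  set β := min (S.sy (j+1)) (S.sz (l+1)) with hβ
  have hαt : α < t := max_lt hj1 hl1
  have htβ : t < β := lt_min hj2 hl2
  have hmem : ∀ u, u ∈ Ioo α β → u ∈ Icc (S.sy j) (S.sy (j+1)) ∧ u ∈ Icc (S.sz l) (S.sz (l+1)) := by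
    intro u hu
    constructor
    · exact ⟨le_trans (le_max_left _ _) hu.1.le, le_trans hu.2.le (min_le_left _ _)⟩
    · exact ⟨le_trans (le_max_right _ _) hu.1.le, le_trans hu.2.le (min_le_right _ _)⟩
  have htmem := hmem t ⟨hαt, htβ⟩
  have hd : ∀ u, u ∈ Ioo α β → S.Y u - S.Z u = c * (u - t) := by
    intro u hu
    obtain ⟨h1, h2⟩ := hmem u hu
    have e1 := hc₀ u h1 h2
    have e2 := hc₀ t htmem.1 htmem.2
    have e3 : S.Y t - S.Z t = 0 := by rw [hYZ]; ring
    linear_combination e1 + e3 - e2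
  have hYvc : ContinuousAt S.Yv t := S.HY.bvel_continuousAt (S.ne_sy hj1 hj2)
  have hZvc : ContinuousAt S.Zv t := S.HZ.bvel_continuousAt (S.ne_sz hl1 hl2)
  have hmemR : Ioo t β ∈ 𝓝[>] t := Ioo_mem_nhdsGT_of_mem ⟨le_rfl, htβ⟩
  have hmemL : Ioo α t ∈ 𝓝[<] t := Ioo_mem_nhdsLT_of_mem ⟨hαt, le_rfl⟩
  rcases lt_or_gt_of_ne hcne with hneg | hpos
  · -- c < 0 : Y < Z to the right, Z < Y to the left
    have hevR : ∀ᶠ u in 𝓝[>] t, S.Y u < S.Z u :=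
      eventually_of_mem hmemR (fun u hu => by
        have := hd u ⟨lt_trans hαt hu.1, hu.2⟩
        nlinarith [mul_neg_of_neg_of_pos hneg (by linarith [hu.1] : (0:ℝ) < u - t)])
    have hevL : ∀ᶠ u in 𝓝[<] t, S.Z u < S.Y u :=
      eventually_of_mem hmemL (fun u hu => by
        have := hd u ⟨hu.1, lt_trans hu.2 htβ⟩
        nlinarith [mul_pos_of_neg_of_neg hneg (by linarith [hu.2] : u - t < 0)])
    refine ⟨S.Yv t, S.Zv t, ?_, ?_, ?_, ?_, Or.inl rfl, Or.inr rfl⟩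
    · exact (hYvc.tendsto.mono_left nhdsWithin_le_nhds).congr'
        (hevL.mono fun u hu => (S.v1_eq_Yv hu.le).symm)
    · exact (hZvc.tendsto.mono_left nhdsWithin_le_nhds).congr'
        (hevL.mono fun u hu => (S.v2_eq_Zv hu.le).symm)
    · exact (hZvc.tendsto.mono_left nhdsWithin_le_nhds).congr'
        (hevR.mono fun u hu => (S.v1_eq_Zv hu).symm)
    · exact (hYvc.tendsto.mono_left nhdsWithin_le_nhds).congr'
        (hevR.mono fun u hu => (S.v2_eq_Yv hu).symm)
  · -- c > 0 : Z < Y to the right, Y < Z to the left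
    have hevR : ∀ᶠ u in 𝓝[>] t, S.Z u < S.Y u :=
      eventually_of_mem hmemR (fun u hu => by
        have := hd u ⟨lt_trans hαt hu.1, hu.2⟩
        nlinarith [mul_pos hpos (by linarith [hu.1] : (0:ℝ) < u - t)])
    have hevL : ∀ᶠ u in 𝓝[<] t, S.Y u < S.Z u :=
      eventually_of_mem hmemL (fun u hu => by
        have := hd u ⟨hu.1, lt_trans hu.2 htβ⟩
        nlinarith [mul_neg_of_pos_of_neg hpos (by linarith [hu.2] : u - t < 0)])
    refine ⟨S.Zv t, S.Yv t, ?_, ?_, ?_, ?_, Or.inr rfl, Or.inl rfl⟩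
    · exact (hZvc.tendsto.mono_left nhdsWithin_le_nhds).congr'
        (hevL.mono fun u hu => (S.v1_eq_Zv hu).symm)
    · exact (hYvc.tendsto.mono_left nhdsWithin_le_nhds).congr'
        (hevL.mono fun u hu => (S.v2_eq_Yv hu).symm)
    · exact (hYvc.tendsto.mono_left nhdsWithin_le_nhds).congr'
        (hevR.mono fun u hu => (S.v1_eq_Yv hu.le).symm)
    · exact (hZvc.tendsto.mono_left nhdsWithin_le_nhds).congr'
        (hevR.mono fun u hu => (S.v2_eq_Zv hu.le).symm)

theorem ybounce_right (j : ℕ) (h0 : 0 ≤ S.sy j) :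
    Tendsto S.v2 (𝓝[>] (S.sy j)) (𝓝 (S.νy j)) := by
  have hev := (S.ybounce_ev j h0).filter_mono (nhdsWithin_le_nhds (s := Ioi (S.sy j)))
  exact (S.HY.bvel_tendsto_right j).congr' (hev.mono fun u hu => (S.v2_eq_Yv hu).symm)

theorem ybounce_left (j : ℕ) (h0 : 0 ≤ S.sy (j + 1)) :
    Tendsto S.v2 (𝓝[<] (S.sy (j + 1))) (𝓝 (-(S.νy j))) := by
  have hev := (S.ybounce_ev (j+1) h0).filter_mono (nhdsWithin_le_nhds (s := Iio (S.sy (j+1))))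
  exact (S.HY.bvel_tendsto_left j).congr' (hev.mono fun u hu => (S.v2_eq_Yv hu).symm)

theorem zbounce_right (l : ℕ) (h0 : 0 ≤ S.sz l) :
    Tendsto S.v2 (𝓝[>] (S.sz l)) (𝓝 (S.νz l)) := by
  have hev := (S.zbounce_ev l h0).filter_mono (nhdsWithin_le_nhds (s := Ioi (S.sz l)))
  exact (S.HZ.bvel_tendsto_right l).congr' (hev.mono fun u hu => (S.v2_eq_Zv hu.le).symm)

theorem zbounce_left (l : ℕ) (h0 : 0 ≤ S.sz (l + 1)) :
    Tendsto S.v2 (𝓝[<] (S.sz (l + 1))) (𝓝 (-(S.νz l))) := by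
  have hev := (S.zbounce_ev (l+1) h0).filter_mono (nhdsWithin_le_nhds (s := Iio (S.sz (l+1))))
  exact (S.HZ.bvel_tendsto_left l).congr' (hev.mono fun u hu => (S.v2_eq_Zv hu.le).symm)

theorem ybounce_v1 (j : ℕ) (h0 : 0 ≤ S.sy j) :
    ∃ a, Tendsto S.v1 (𝓝[<] (S.sy j)) (𝓝 a) ∧ Tendsto S.v1 (𝓝[>] (S.sy j)) (𝓝 a) := by
  have hZvc : ContinuousAt S.Zv (S.sy j) :=
    S.HZ.bvel_continuousAt (fun i => S.sy_ne_sz j i)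
  have hev := S.ybounce_ev j h0
  refine ⟨S.Zv (S.sy j), ?_, ?_⟩
  · exact (hZvc.tendsto.mono_left nhdsWithin_le_nhds).congr'
      ((hev.filter_mono (nhdsWithin_le_nhds (s := Iio (S.sy j)))).mono
        fun u hu => (S.v1_eq_Zv hu).symm)
  · exact (hZvc.tendsto.mono_left nhdsWithin_le_nhds).congr'
      ((hev.filter_mono (nhdsWithin_le_nhds (s := Ioi (S.sy j)))).mono
        fun u hu => (S.v1_eq_Zv hu).symm)

theorem zbounce_v1 (l : ℕ) (h0 : 0 ≤ S.sz l) :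
    ∃ a, Tendsto S.v1 (𝓝[<] (S.sz l)) (𝓝 a) ∧ Tendsto S.v1 (𝓝[>] (S.sz l)) (𝓝 a) := by
  have hYvc : ContinuousAt S.Yv (S.sz l) :=
    S.HY.bvel_continuousAt (fun i => fun h => S.sy_ne_sz i l h.symm)
  have hev := S.zbounce_ev l h0
  refine ⟨S.Yv (S.sz l), ?_, ?_⟩
  · exact (hYvc.tendsto.mono_left nhdsWithin_le_nhds).congr'
      ((hev.filter_mono (nhdsWithin_le_nhds (s := Iio (S.sz l)))).mono
        fun u hu => (S.v1_eq_Yv hu.le).symm)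
  · exact (hYvc.tendsto.mono_left nhdsWithin_le_nhds).congr'
      ((hev.filter_mono (nhdsWithin_le_nhds (s := Ioi (S.sz l)))).mono
        fun u hu => (S.v1_eq_Yv hu.le).symm)

theorem Y_apex_val (j : ℕ) : S.Y (S.ay j) = f S.t₀ + S.νy j ^ 2 / (2 * g) :=
  S.HY.btraj_apex j

theorem zmax_lt_apex (j : ℕ) : S.zmax < S.Y (S.ay j) := by
  rw [S.Y_apex_val j, zmax]
  have hC2 := S.hC2
  have hg := S.hg
  have hT := S.hT
  have h1 : g * T * S.N₁ ≤ S.νy j := S.νy_ge j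
  have h2 : (0:ℝ) ≤ g * T * S.N₁ := by positivity
  have h3 : (g * T * S.N₁) ^ 2 ≤ S.νy j ^ 2 := by nlinarith
  have h4 : (g * T * S.N₁) ^ 2 / (2 * g) ≤ S.νy j ^ 2 / (2 * g) := by gcongr <;> nlinarith
  linarith

theorem Y_lt_Z_at_sy (j : ℕ) (h0 : 0 ≤ S.sy j) : S.Y (S.sy j) < S.Z (S.sy j) := by
  have hYb : S.Y (S.sy j) = f (S.sy j) := S.Y_bounce j
  have hZf : f (S.sy j) ≤ S.Z (S.sy j) := S.Z_ge_f h0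
  have hne : S.Z (S.sy j) ≠ f (S.sy j) := fun h => S.not_both_contact h0 ⟨hYb, h⟩
  rw [hYb]
  exact lt_of_le_of_ne hZf (Ne.symm hne)

theorem sy_lt_ay (j : ℕ) : S.sy j < S.ay j := by
  rw [ay]
  have h1 := S.HY.νpos j
  have hg := S.hg
  have := div_pos h1 hg
  linarith

theorem ay_lt_next (j : ℕ) : S.ay j < S.sy (j + 1) := by
  rw [ay, S.HY.hstep j]
  have hν := S.HY.νpos j
  have hg := S.hg
  have : S.νy j / g < 2 * S.νy j / g := by
    rw [div_lt_div_iff₀ hg hg]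
    nlinarith
  linarith

/-- an up-crossing in flight `j` of `Y`, with large speed -/
theorem tstar_exists (j : ℕ) (hj : 1 ≤ j) :
    ∃ t, S.sy j < t ∧ t < S.ay j ∧ S.Y t = S.Z t ∧
      Tendsto S.v1 (𝓝[>] t) (𝓝 (S.Yv t)) ∧
      S.νy j ^ 2 - 2 * g * (S.zmax - f S.t₀) ≤ S.Yv t ^ 2 := by
  have h0j : 0 < S.sy j := S.sy_lt_of_index hj
  set d := fun u => S.Y u - S.Z u with hd
  have hdc : Continuous d := S.Y_cont.sub S.Z_cont
  have hd1 : d (S.sy j) < 0 := by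
    have := S.Y_lt_Z_at_sy j h0j.le
    simp only [hd]
    linarith
  have hd2 : 0 < d (S.ay j) := by
    have h1 := S.zmax_lt_apex j
    have h2 := S.Z_le_zmax (S.ay j)
    simp only [hd]
    linarith
  set A := Icc (S.sy j) (S.ay j) ∩ {u | d u ≤ 0} with hA
  have hAcl : IsClosed A := isClosed_Icc.inter (isClosed_le hdc continuous_const)
  have hAne : A.Nonempty := ⟨S.sy j, ⟨le_rfl, (S.sy_lt_ay j).le⟩, hd1.le⟩
  have hAbdd : BddAbove A := ⟨S.ay j, fun u hu => hu.1.2⟩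
  set t := sSup A with htdef
  have htA : t ∈ A := hAcl.csSup_mem hAne hAbdd
  have ht1 : S.sy j ≤ t := htA.1.1
  have ht2 : t ≤ S.ay j := htA.1.2
  have htd : d t ≤ 0 := htA.2
  have htlt : t < S.ay j := lt_of_le_of_ne ht2 (fun h => by rw [h] at htd; linarith)
  have hgt : ∀ u, t < u → u ≤ S.ay j → 0 < d u := by
    intro u h1 h2
    by_contra hc
    push_neg at hc
    have hu : u ∈ A := ⟨⟨le_trans ht1 h1.le, h2⟩, hc⟩
    exact absurd (le_csSup hAbdd hu) (not_le.mpr h1)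
  have hevpos : ∀ᶠ u in 𝓝[>] t, 0 < d u :=
    eventually_of_mem (Ioc_mem_nhdsGT_of_mem ⟨le_rfl, htlt⟩) (fun u hu => hgt u hu.1 hu.2)
  have htd0 : d t = 0 := by
    rcases eq_or_lt_of_le htd with h | h
    · exact h
    · exfalso
      have hevneg : ∀ᶠ u in 𝓝[>] t, d u < 0 :=
        (eventually_of_mem ((isOpen_lt hdc continuous_const).mem_nhds h) (fun u hu => hu)).filter_mono
          (nhdsWithin_le_nhds (s := Ioi t))
      obtain ⟨u, hu1, hu2⟩ := (hevneg.and hevpos).exists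
      linarith
  have htgt : S.sy j < t := lt_of_le_of_ne ht1 (fun h => by rw [← h] at htd0; linarith)
  have hcross : S.Y t = S.Z t := by
    have := htd0
    simp only [hd] at this
    linarith
  have hevYZ : ∀ᶠ u in 𝓝[>] t, S.Z u < S.Y u :=
    hevpos.mono (fun u hu => by simp only [hd] at hu; linarith)
  have htnext : t < S.sy (j + 1) := lt_trans htlt (S.ay_lt_next j)
  have hYvc : ContinuousAt S.Yv t := S.HY.bvel_continuousAt (S.ne_sy htgt htnext)
  have hlim : Tendsto S.v1 (𝓝[>] t) (𝓝 (S.Yv t)) :=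
    (hYvc.tendsto.mono_left nhdsWithin_le_nhds).congr'
      (hevYZ.mono fun u hu => (S.v1_eq_Yv hu.le).symm)
  refine ⟨t, htgt, htlt, hcross, hlim, ?_⟩
  have hsq : S.Yv t ^ 2 = S.νy j ^ 2 - 2 * g * (S.Y t - f S.t₀) := S.HY.bvel_sq ht1 htnext
  have hzle : S.Y t ≤ S.zmax := by rw [hcross]; exact S.Z_le_zmax t
  have hg := S.hg
  nlinarith [mul_nonneg hg.le (sub_nonneg.mpr hzle)]

/-- a down-crossing in flight `j` of `Y`, after which the upper ball is slow -/
theorem tdstar_exists (j : ℕ) (hj : 1 ≤ j) :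
    ∃ t, S.ay j < t ∧ t < S.sy (j + 1) ∧ S.Y t = S.Z t ∧
      Tendsto S.v1 (𝓝[>] t) (𝓝 (S.Zv t)) ∧ |S.Zv t| ≤ g * T * S.K₁ := by
  have h0j : 0 < S.sy j := S.sy_lt_of_index hj
  set d := fun u => S.Y u - S.Z u with hd
  have hdc : Continuous d := S.Y_cont.sub S.Z_cont
  have hd2 : 0 < d (S.ay j) := by
    have h1 := S.zmax_lt_apex j
    have h2 := S.Z_le_zmax (S.ay j)
    simp only [hd]
    linarith
  have hd3 : d (S.sy (j + 1)) < 0 := by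
    have := S.Y_lt_Z_at_sy (j + 1) (S.sy_lt_of_index (by omega)).le
    simp only [hd]
    linarith
  set A := Icc (S.ay j) (S.sy (j + 1)) ∩ {u | d u ≤ 0} with hA
  have hAcl : IsClosed A := isClosed_Icc.inter (isClosed_le hdc continuous_const)
  have hAne : A.Nonempty := ⟨S.sy (j + 1), ⟨(S.ay_lt_next j).le, le_rfl⟩, hd3.le⟩
  have hAbdd : BddBelow A := ⟨S.ay j, fun u hu => hu.1.1⟩
  set t := sInf A with htdef
  have htA : t ∈ A := hAcl.csInf_mem hAne hAbdd
  have ht1 : S.ay j ≤ t := htA.1.1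
  have ht2 : t ≤ S.sy (j + 1) := htA.1.2
  have htd : d t ≤ 0 := htA.2
  have htgt : S.ay j < t := lt_of_le_of_ne ht1 (fun h => by rw [← h] at htd; linarith)
  have hlt : ∀ u, S.ay j ≤ u → u < t → 0 < d u := by
    intro u h1 h2
    by_contra hc
    push_neg at hc
    have hu : u ∈ A := ⟨⟨h1, le_trans h2.le ht2⟩, hc⟩
    exact absurd (csInf_le hAbdd hu) (not_le.mpr h2)
  have hevpos : ∀ᶠ u in 𝓝[<] t, 0 < d u :=
    eventually_of_mem (Ioo_mem_nhdsLT_of_mem ⟨htgt, le_rfl⟩)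
      (fun u hu => hlt u hu.1.le hu.2)
  have htd0 : d t = 0 := by
    rcases eq_or_lt_of_le htd with h | h
    · exact h
    · exfalso
      have hevneg : ∀ᶠ u in 𝓝[<] t, d u < 0 :=
        (eventually_of_mem ((isOpen_lt hdc continuous_const).mem_nhds h) (fun u hu => hu)).filter_mono
          (nhdsWithin_le_nhds (s := Iio t))
      obtain ⟨u, hu1, hu2⟩ := (hevneg.and hevpos).exists
      linarith
  have htlt : t < S.sy (j + 1) := lt_of_le_of_ne ht2 (fun h => by rw [h] at htd0; linarith)
  have hcross : S.Y t = S.Z t := by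
    have := htd0; simp only [hd] at this; linarith
  have ht0 : (0:ℝ) ≤ t := le_trans (le_trans h0j.le (S.sy_lt_ay j).le) ht1
  obtain ⟨j', l, hj'1, hj'2, hl1, hl2⟩ := S.crossing_piece ht0 hcross
  obtain ⟨c₀, hc₀⟩ := S.diff_affine j' l
  have hcne := S.slope_ne j' l
  set c := g * (S.ay j' - S.az l) with hc
  set α := max (S.sy j') (S.sz l) with hα
  set β := min (S.sy (j' + 1)) (S.sz (l + 1)) with hβ
  have hαt : α < t := max_lt hj'1 hl1
  have htβ : t < β := lt_min hj'2 hl2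
  have hdu : ∀ u, u ∈ Ioo α β → d u = c * (u - t) := by
    intro u hu
    have h1 : u ∈ Icc (S.sy j') (S.sy (j' + 1)) :=
      ⟨le_trans (le_max_left _ _) hu.1.le, le_trans hu.2.le (min_le_left _ _)⟩
    have h2 : u ∈ Icc (S.sz l) (S.sz (l + 1)) :=
      ⟨le_trans (le_max_right _ _) hu.1.le, le_trans hu.2.le (min_le_right _ _)⟩
    have ht1' : t ∈ Icc (S.sy j') (S.sy (j' + 1)) := ⟨hj'1.le, hj'2.le⟩
    have ht2' : t ∈ Icc (S.sz l) (S.sz (l + 1)) := ⟨hl1.le, hl2.le⟩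
    have e1 := hc₀ u h1 h2
    have e2 := hc₀ t ht1' ht2'
    have e3 : S.Y t - S.Z t = 0 := by rw [hcross]; ring
    simp only [hd]
    linear_combination e1 + e3 - e2
  set γ := max α (S.ay j) with hγ
  have hγt : γ < t := max_lt hαt htgt
  set u₀ := (γ + t) / 2 with hu₀
  have hu₀1 : γ < u₀ := by rw [hu₀]; linarith
  have hu₀2 : u₀ < t := by rw [hu₀]; linarith
  have hdu₀pos : 0 < d u₀ := hlt u₀ (le_trans (le_max_right _ _) hu₀1.le) hu₀2
  have hdu₀eq : d u₀ = c * (u₀ - t) :=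
    hdu u₀ ⟨lt_of_le_of_lt (le_max_left _ _) hu₀1, lt_trans hu₀2 htβ⟩
  have hcneg : c < 0 := by nlinarith
  have hevR : ∀ᶠ u in 𝓝[>] t, S.Y u < S.Z u :=
    eventually_of_mem (Ioo_mem_nhdsGT_of_mem ⟨le_rfl, htβ⟩) (fun u hu => by
      have h1 := hdu u ⟨lt_trans hαt hu.1, hu.2⟩
      simp only [hd] at h1
      nlinarith [mul_neg_of_neg_of_pos hcneg (by linarith [hu.1] : (0:ℝ) < u - t)])
  have hZvc : ContinuousAt S.Zv t := S.HZ.bvel_continuousAt (S.ne_sz hl1 hl2)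
  have hlim : Tendsto S.v1 (𝓝[>] t) (𝓝 (S.Zv t)) :=
    (hZvc.tendsto.mono_left nhdsWithin_le_nhds).congr'
      (hevR.mono fun u hu => (S.v1_eq_Zv hu).symm)
  refine ⟨t, htgt, htlt, hcross, hlim, ?_⟩
  exact S.HZ.bvel_abs_le hl1.le hl2

theorem max_eq_min_iff' {a b : ℝ} : max a b = min a b ↔ a = b := by
  constructor
  · intro h
    have h1 : a ≤ max a b := le_max_left _ _
    have h2 : min a b ≤ b := min_le_right _ _
    have h3 : b ≤ max a b := le_max_right _ _
    have h4 : min a b ≤ a := min_le_left _ _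
    exact le_antisymm (by rw [h] at h1; linarith) (by rw [h] at h3; linarith)
  · intro h; rw [h]; simp

theorem contact_cases {t : ℝ} (ht : 0 ≤ t) (h : min (S.Y t) (S.Z t) = f t) :
    (∃ j, t = S.sy j) ∨ (∃ l, t = S.sz l) := by
  rcases le_total (S.Y t) (S.Z t) with hc | hc
  · exact Or.inl ((S.Y_contact_iff ht).mp (by rw [← h, min_eq_left hc]))
  · exact Or.inr ((S.Z_contact_iff ht).mp (by rw [← h, min_eq_right hc]))

theorem coll_isolated (t : ℝ) : ∃ ε > (0:ℝ), ∀ u, 0 ≤ u →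
    (min (S.Y u) (S.Z u) = f u ∨ max (S.Y u) (S.Z u) = min (S.Y u) (S.Z u)) →
    |u - t| < ε → u = t := by
  rcases lt_or_ge t 0 with htneg | ht0
  · refine ⟨-t, by linarith, fun u hu _ habs => absurd habs (not_lt.mpr ?_)⟩
    rw [abs_of_nonneg (by linarith)]
    linarith
  obtain ⟨εy, hεy, hdy⟩ := S.HY.s_discrete t
  obtain ⟨εz, hεz, hdz⟩ := S.HZ.s_discrete t
  rcases eq_or_ne (S.Y t) (S.Z t) with hYZ | hYZ
  · -- crossing at t
    obtain ⟨j, l, hj1, hj2, hl1, hl2⟩ := S.crossing_piece ht0 hYZ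
    obtain ⟨c₀, hc₀⟩ := S.diff_affine j l
    have hcne := S.slope_ne j l
    set α := max (S.sy j) (S.sz l) with hα
    set β := min (S.sy (j + 1)) (S.sz (l + 1)) with hβ
    have hαt : α < t := max_lt hj1 hl1
    have htβ : t < β := lt_min hj2 hl2
    refine ⟨min (t - α) (β - t), by simp; constructor <;> linarith, ?_⟩
    intro u hu hcoll habs
    rw [abs_lt] at habs
    have huIoo : u ∈ Ioo α β := by
      constructor
      · have := min_le_left (t - α) (β - t); linarith [habs.1]
      · have := min_le_right (t - α) (β - t); linarith [habs.2]
    rcases hcoll with hc | hc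
    · exfalso
      rcases S.contact_cases hu hc with ⟨i, heq⟩ | ⟨i, heq⟩
      · exact S.ne_sy (lt_of_le_of_lt (le_max_left _ _) huIoo.1)
          (lt_of_lt_of_le huIoo.2 (min_le_left _ _)) i heq
      · exact S.ne_sz (lt_of_le_of_lt (le_max_right _ _) huIoo.1)
          (lt_of_lt_of_le huIoo.2 (min_le_right _ _)) i heq
    · have hYZu : S.Y u = S.Z u := max_eq_min_iff'.mp hc
      have h1 : u ∈ Icc (S.sy j) (S.sy (j + 1)) :=
        ⟨le_trans (le_max_left _ _) huIoo.1.le, le_trans huIoo.2.le (min_le_left _ _)⟩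
      have h2 : u ∈ Icc (S.sz l) (S.sz (l + 1)) :=
        ⟨le_trans (le_max_right _ _) huIoo.1.le, le_trans huIoo.2.le (min_le_right _ _)⟩
      have e1 := hc₀ u h1 h2
      have e2 := hc₀ t ⟨hj1.le, hj2.le⟩ ⟨hl1.le, hl2.le⟩
      have e3 : S.Y t - S.Z t = 0 := by rw [hYZ]; ring
      have e4 : S.Y u - S.Z u = 0 := by rw [hYZu]; ring
      have : g * (S.ay j - S.az l) * (u - t) = 0 := by linear_combination e2 + e4 - e1 - e3
      rcases mul_eq_zero.mp this with h' | h'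
      · exact absurd h' hcne
      · linarith [sub_eq_zero.mp h']
  · -- no crossing at t
    have hop : IsOpen {u | S.Y u = S.Z u}ᶜ := (isClosed_eq S.Y_cont S.Z_cont).isOpen_compl
    obtain ⟨δ, hδ, hball⟩ := Metric.mem_nhds_iff.mp (hop.mem_nhds hYZ)
    refine ⟨min (min εy εz) δ, by positivity, ?_⟩
    intro u hu hcoll habs
    rcases hcoll with hc | hc
    · rcases S.contact_cases hu hc with ⟨i, heq⟩ | ⟨i, heq⟩
      · have h' : |S.sy i - t| < εy := by
          rw [← heq]
          exact lt_of_lt_of_le habs (le_trans (min_le_left _ _) (min_le_left _ _))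
        rw [heq]
        exact hdy i h'
      · have h' : |S.sz i - t| < εz := by
          rw [← heq]
          exact lt_of_lt_of_le habs (le_trans (min_le_left _ _) (min_le_right _ _))
        rw [heq]
        exact hdz i h'
    · exfalso
      have hYZu : S.Y u = S.Z u := max_eq_min_iff'.mp hc
      have : u ∈ Metric.ball t δ := by
        rw [Metric.mem_ball, Real.dist_eq]
        exact lt_of_lt_of_le habs (min_le_right _ _)
      exact hball this hYZu

theorem freefall {t : ℝ} (ht : 0 ≤ t)
    (hmin : min (S.Y t) (S.Z t) ≠ f t) (hne : S.Y t ≠ S.Z t) :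
    (HasDerivAt (fun u => max (S.Y u) (S.Z u)) (S.v1 t) t ∧ HasDerivAt S.v1 (-g) t) ∧
    (HasDerivAt (fun u => min (S.Y u) (S.Z u)) (S.v2 t) t ∧ HasDerivAt S.v2 (-g) t) := by
  have hnb_y : ∀ i, t ≠ S.sy i := by
    intro i heq
    apply hmin
    have hY : S.Y t = f t := by rw [heq]; exact S.Y_bounce i
    have hZ : f t ≤ S.Z t := S.Z_ge_f ht
    rw [min_eq_left (by rw [hY]; exact hZ), hY]
  have hnb_z : ∀ i, t ≠ S.sz i := by
    intro i heq
    apply hmin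
    have hZ : S.Z t = f t := by rw [heq]; exact S.Z_bounce i
    have hY : f t ≤ S.Y t := S.Y_ge_f ht
    rw [min_eq_right (by rw [hZ]; exact hY), hZ]
  have hYd : HasDerivAt S.Y (S.Yv t) t := (S.HY.hasDeriv_off hnb_y).1
  have hYvd : HasDerivAt S.Yv (-g) t := (S.HY.hasDeriv_off hnb_y).2
  have hZd : HasDerivAt S.Z (S.Zv t) t := (S.HZ.hasDeriv_off hnb_z).1
  have hZvd : HasDerivAt S.Zv (-g) t := (S.HZ.hasDeriv_off hnb_z).2
  rcases lt_or_gt_of_ne hne with hlt | hlt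
  · -- Y t < Z t : upper ball is Z
    have hev : ∀ᶠ u in 𝓝 t, S.Y u < S.Z u := (isOpen_lt S.Y_cont S.Z_cont).mem_nhds hlt
    have hmax : (fun u => max (S.Y u) (S.Z u)) =ᶠ[𝓝 t] S.Z :=
      hev.mono fun u hu => max_eq_right hu.le
    have hminf : (fun u => min (S.Y u) (S.Z u)) =ᶠ[𝓝 t] S.Y :=
      hev.mono fun u hu => min_eq_left hu.le
    have hv1 : S.v1 =ᶠ[𝓝 t] S.Zv := hev.mono fun u hu => S.v1_eq_Zv hu
    have hv2 : S.v2 =ᶠ[𝓝 t] S.Yv := hev.mono fun u hu => S.v2_eq_Yv hu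
    refine ⟨⟨?_, ?_⟩, ?_, ?_⟩
    · rw [Filter.EventuallyEq.hasDerivAt_iff hmax, S.v1_eq_Zv hlt]
      exact hZd
    · rw [Filter.EventuallyEq.hasDerivAt_iff hv1]
      exact hZvd
    · rw [Filter.EventuallyEq.hasDerivAt_iff hminf, S.v2_eq_Yv hlt]
      exact hYd
    · rw [Filter.EventuallyEq.hasDerivAt_iff hv2]
      exact hYvd
  · -- Z t < Y t : upper ball is Y
    have hev : ∀ᶠ u in 𝓝 t, S.Z u < S.Y u := (isOpen_lt S.Z_cont S.Y_cont).mem_nhds hlt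
    have hmax : (fun u => max (S.Y u) (S.Z u)) =ᶠ[𝓝 t] S.Y :=
      hev.mono fun u hu => max_eq_left hu.le
    have hminf : (fun u => min (S.Y u) (S.Z u)) =ᶠ[𝓝 t] S.Z :=
      hev.mono fun u hu => min_eq_right hu.le
    have hv1 : S.v1 =ᶠ[𝓝 t] S.Yv := hev.mono fun u hu => S.v1_eq_Yv hu.le
    have hv2 : S.v2 =ᶠ[𝓝 t] S.Zv := hev.mono fun u hu => S.v2_eq_Zv hu.le
    refine ⟨⟨?_, ?_⟩, ?_, ?_⟩
    · rw [Filter.EventuallyEq.hasDerivAt_iff hmax, S.v1_eq_Yv hlt.le]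
      exact hYd
    · rw [Filter.EventuallyEq.hasDerivAt_iff hv1]
      exact hYvd
    · rw [Filter.EventuallyEq.hasDerivAt_iff hminf, S.v2_eq_Zv hlt.le]
      exact hZd
    · rw [Filter.EventuallyEq.hasDerivAt_iff hv2]
      exact hZvd

theorem deriv_f_sy (i : ℕ) : deriv f (S.sy i) = deriv f S.t₀ := by
  rw [sy, mul_comm T _]
  exact (S.hdper.int_mul (S.ιy i)) S.t₀

theorem deriv_f_sz (i : ℕ) : deriv f (S.sz i) = deriv f S.u₀ := by
  rw [sz, mul_comm T _]
  exact (S.hdper.int_mul (S.ιz i)) S.u₀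

theorem νy_ge_j (j : ℕ) : g * T * (j : ℝ) ≤ S.νy j := by
  rw [νy]
  have hg := S.hg; have hT := S.hT
  have hK : (1:ℝ) ≤ (S.K : ℝ) := by exact_mod_cast S.hK
  have h1 : (j:ℝ) ≤ (S.N₁:ℝ) + S.K * j := by nlinarith [Nat.cast_nonneg (α := ℝ) S.N₁, Nat.cast_nonneg (α := ℝ) j]
  nlinarith [mul_pos hg hT]

theorem sy_large (x : ℝ) : ∃ j : ℕ, 1 ≤ j ∧ x < S.sy j := by
  obtain ⟨n, hn⟩ := exists_nat_gt ((x - S.sy 0) / T)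
  refine ⟨n + 1, by omega, ?_⟩
  have h1 := S.HY.s_ge (n + 1)
  have hT := S.hT
  have h2 := (div_lt_iff₀ hT).mp hn
  push_cast at h1 ⊢
  nlinarith

theorem sz_large (x : ℝ) : ∃ l : ℕ, 1 ≤ l ∧ x < S.sz l := by
  obtain ⟨n, hn⟩ := exists_nat_gt ((x - S.sz 0) / T)
  refine ⟨n + 1, by omega, ?_⟩
  have h1 := S.HZ.s_ge (n + 1)
  have hT := S.hT
  have h2 := (div_lt_iff₀ hT).mp hn
  push_cast at h1 ⊢
  nlinarith

theorem min_eq_f_at_sy (j : ℕ) (h0 : 0 ≤ S.sy j) :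
    min (S.Y (S.sy j)) (S.Z (S.sy j)) = f (S.sy j) := by
  rw [min_eq_left (S.Y_lt_Z_at_sy j h0).le]
  exact S.Y_bounce j

theorem Z_lt_Y_at_sz (l : ℕ) (h0 : 0 ≤ S.sz l) : S.Z (S.sz l) < S.Y (S.sz l) := by
  have hZb : S.Z (S.sz l) = f (S.sz l) := S.Z_bounce l
  have hYf : f (S.sz l) ≤ S.Y (S.sz l) := S.Y_ge_f h0
  have hne : S.Y (S.sz l) ≠ f (S.sz l) := fun h => S.not_both_contact h0 ⟨h, hZb⟩
  rw [hZb]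
  exact lt_of_le_of_ne hYf (Ne.symm hne)

theorem min_eq_f_at_sz (l : ℕ) (h0 : 0 ≤ S.sz l) :
    min (S.Y (S.sz l)) (S.Z (S.sz l)) = f (S.sz l) := by
  rw [min_eq_right (S.Z_lt_Y_at_sz l h0).le]
  exact S.Z_bounce l

/-- the motion of the two-ball system -/
noncomputable def motion (m : ℝ) : BouncingBallMotion g f m m where
  x₁ := fun t => max (S.Y t) (S.Z t)
  x₂ := fun t => min (S.Y t) (S.Z t)
  v₁ := S.v1
  v₂ := S.v2
  coll := {t | t ∈ Set.Ici (0:ℝ) ∧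
    (min (S.Y t) (S.Z t) = f t ∨ max (S.Y t) (S.Z t) = min (S.Y t) (S.Z t))}
  cont₁ := (S.Y_cont.max S.Z_cont).continuousOn
  cont₂ := (S.Y_cont.min S.Z_cont).continuousOn
  order := fun t ht => ⟨le_min (S.Y_ge_f ht) (S.Z_ge_f ht), min_le_max⟩
  coll_sub := fun t ht => ht.1
  coll_discrete := by
    intro t
    obtain ⟨ε, hε, h⟩ := S.coll_isolated t
    exact ⟨ε, hε, fun u hu habs => h u hu.1 hu.2 habs⟩
  freefall₁ := by
    intro t ht
    have h1 : (0:ℝ) ≤ t := ht.1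
    have hmin : min (S.Y t) (S.Z t) ≠ f t := fun hc => ht.2 ⟨ht.1, Or.inl hc⟩
    have hne : S.Y t ≠ S.Z t := fun hc => ht.2 ⟨ht.1, Or.inr (max_eq_min_iff'.mpr hc)⟩
    exact (S.freefall h1 hmin hne).1
  freefall₂ := by
    intro t ht
    have h1 : (0:ℝ) ≤ t := ht.1
    have hmin : min (S.Y t) (S.Z t) ≠ f t := fun hc => ht.2 ⟨ht.1, Or.inl hc⟩
    have hne : S.Y t ≠ S.Z t := fun hc => ht.2 ⟨ht.1, Or.inr (max_eq_min_iff'.mpr hc)⟩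
    exact (S.freefall h1 hmin hne).2
  contact_mem_coll := fun t ht hc => ⟨ht, hc⟩
  coll_is_contact := fun t ht => ht.2
  no_triple := by
    rintro t ht ⟨hc1, hc2⟩
    have hc1' : min (S.Y t) (S.Z t) = f t := hc1
    have hc2' : max (S.Y t) (S.Z t) = min (S.Y t) (S.Z t) := hc2
    have hYZ : S.Y t = S.Z t := max_eq_min_iff'.mp hc2'
    rw [hYZ, min_self] at hc1'
    exact S.not_both_contact ht.1 ⟨by rw [hYZ]; exact hc1', hc1'⟩
  plate_law := by
    intro t ht htpos hc
    rcases S.contact_cases ht.1 hc with ⟨j, rfl⟩ | ⟨l, rfl⟩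
    · have hj : 1 ≤ j := by
        rcases Nat.eq_zero_or_pos j with h | h
        · exfalso; rw [h] at htpos; linarith [S.sy0_le]
        · exact h
      obtain ⟨j', rfl⟩ : ∃ j', j = j' + 1 := ⟨j - 1, by omega⟩
      constructor
      · refine ⟨-(S.νy j'), S.νy (j' + 1), S.ybounce_left j' htpos.le,
          S.ybounce_right (j' + 1) htpos.le, ?_⟩
        rw [S.deriv_f_sy (j' + 1), S.hdt₀, νy, νy]
        push_cast
        ring
      · exact S.ybounce_v1 (j' + 1) htpos.le
    · have hl : 1 ≤ l := by
        rcases Nat.eq_zero_or_pos l with h | h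
        · exfalso; rw [h] at htpos; linarith [S.sz0_le]
        · exact h
      obtain ⟨l', rfl⟩ : ∃ l', l = l' + 1 := ⟨l - 1, by omega⟩
      constructor
      · refine ⟨-(S.νz l'), S.νz (l' + 1), S.zbounce_left l' htpos.le,
          S.zbounce_right (l' + 1) htpos.le, ?_⟩
        rw [S.deriv_f_sz (l' + 1), S.hdu₀, νz, νz]
        ring
      · exact S.zbounce_v1 (l' + 1) htpos.le
  ball_law := by
    intro t ht htpos hc
    have hYZ : S.Y t = S.Z t := max_eq_min_iff'.mp hc
    obtain ⟨A, B, h1, h2, h3, h4, _, _⟩ := S.crossing_limits ht.1 hYZ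
    have hm0 : (m - m) / (m + m) = 0 := by rw [sub_self, zero_div]
    exact ⟨A, B, B, A, h1, h2, h3, h4, by rw [hm0]; ring, by rw [hm0]; ring⟩

include S in
theorem main (m : ℝ) :
    ∃ M : BouncingBallMotion g f m m, ∃ p q V₁ V₂ : ℕ → ℝ,
      StrictMono p ∧ StrictMono q ∧
      (∀ i : ℕ, p i ∈ M.coll ∧ M.x₂ (p i) = f (p i)) ∧
      (∀ i : ℕ, q i ∈ M.coll ∧ M.x₁ (q i) = M.x₂ (q i)) ∧
      (∀ t ∈ M.coll, M.x₂ t = f t → ∃ i : ℕ, p i = t) ∧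
      (∀ t ∈ M.coll, M.x₁ t = M.x₂ t → ∃ i : ℕ, q i = t) ∧
      (∀ i : ℕ, Tendsto M.v₂ (𝓝[>] (p i)) (𝓝 (V₂ i))) ∧
      (∀ i : ℕ, Tendsto M.v₁ (𝓝[>] (q i)) (𝓝 (V₁ i))) ∧
      (∀ C : ℝ, ∃ᶠ i in atTop, C < |V₁ i|) ∧
      (∀ C : ℝ, ∃ᶠ i in atTop, C < |V₂ i|) ∧
      (∃ C : ℝ, ∃ᶠ i in atTop, |V₁ i| ≤ C) ∧
      (∃ C : ℝ, ∃ᶠ i in atTop, |V₂ i| ≤ C) := by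
  classical
  have hg := S.hg
  have hT := S.hT
  have hgT : (0:ℝ) < g * T := mul_pos hg hT
  -- the set of plate collisions
  set P : Set ℝ := {t | 0 ≤ t ∧ min (S.Y t) (S.Z t) = f t} with hPdef
  have hPcl : IsClosed P :=
    (isClosed_le continuous_const continuous_id).inter
      (isClosed_eq (S.Y_cont.min S.Z_cont) S.hfc)
  have hPbd : BddBelow P := ⟨0, fun u hu => hu.1⟩
  have hPub : ∀ x : ℝ, ∃ y ∈ P, x < y := by
    intro x
    obtain ⟨j, hj, hx⟩ := S.sy_large x
    exact ⟨S.sy j, ⟨(S.sy_lt_of_index hj).le, S.min_eq_f_at_sy j (S.sy_lt_of_index hj).le⟩, hx⟩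
  have hPdisc : ∀ t : ℝ, ∃ ε > (0:ℝ), ∀ u ∈ P, |u - t| < ε → u = t := by
    intro t
    obtain ⟨ε, hε, h⟩ := S.coll_isolated t
    exact ⟨ε, hε, fun u hu habs => h u hu.1 (Or.inl hu.2) habs⟩
  obtain ⟨p, hpmono, hpmem, hpsurj, hptends⟩ := exists_enum hPcl hPbd hPub hPdisc
  -- the set of ball-ball collisions
  set Q : Set ℝ := {t | 0 ≤ t ∧ S.Y t = S.Z t} with hQdef
  have hQcl : IsClosed Q :=
    (isClosed_le continuous_const continuous_id).inter (isClosed_eq S.Y_cont S.Z_cont)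
  have hQbd : BddBelow Q := ⟨0, fun u hu => hu.1⟩
  have hQub : ∀ x : ℝ, ∃ y ∈ Q, x < y := by
    intro x
    obtain ⟨j, hj, hx⟩ := S.sy_large x
    obtain ⟨t, ht1, ht2, hcr, _, _⟩ := S.tstar_exists j hj
    exact ⟨t, ⟨le_trans (S.sy_lt_of_index hj).le ht1.le, hcr⟩, lt_trans hx ht1⟩
  have hQdisc : ∀ t : ℝ, ∃ ε > (0:ℝ), ∀ u ∈ Q, |u - t| < ε → u = t := by
    intro t
    obtain ⟨ε, hε, h⟩ := S.coll_isolated t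
    exact ⟨ε, hε, fun u hu habs => h u hu.1 (Or.inr (max_eq_min_iff'.mpr hu.2)) habs⟩
  obtain ⟨q, hqmono, hqmem, hqsurj, hqtends⟩ := exists_enum hQcl hQbd hQub hQdisc
  -- post-collision velocities
  have hV2ex : ∀ i : ℕ, ∃ V, Tendsto S.v2 (𝓝[>] (p i)) (𝓝 V) := by
    intro i
    rcases S.contact_cases (hpmem i).1 (hpmem i).2 with ⟨j, heq⟩ | ⟨l, heq⟩
    · rw [heq]
      exact ⟨S.νy j, S.ybounce_right j (heq ▸ (hpmem i).1)⟩
    · rw [heq]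
      exact ⟨S.νz l, S.zbounce_right l (heq ▸ (hpmem i).1)⟩
  choose V₂ hV₂ using hV2ex
  have hV1ex : ∀ i : ℕ, ∃ V, Tendsto S.v1 (𝓝[>] (q i)) (𝓝 V) := by
    intro i
    obtain ⟨A, B, _, _, h3, _, _, _⟩ := S.crossing_limits (hqmem i).1 (hqmem i).2
    exact ⟨B, h3⟩
  choose V₁ hV₁ using hV1ex
  have huniq1 : ∀ i t V, q i = t → Tendsto S.v1 (𝓝[>] t) (𝓝 V) → V₁ i = V := by
    intro i t V heq hV
    exact tendsto_nhds_unique (heq ▸ hV₁ i) hV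
  have huniq2 : ∀ i t V, p i = t → Tendsto S.v2 (𝓝[>] t) (𝓝 V) → V₂ i = V := by
    intro i t V heq hV
    exact tendsto_nhds_unique (heq ▸ hV₂ i) hV
  set D := 2 * g * (S.zmax - f S.t₀) with hD
  refine ⟨S.motion m, p, q, V₁, V₂, hpmono, hqmono, ?_, ?_, ?_, ?_, hV₂, hV₁, ?_, ?_, ?_, ?_⟩
  · intro i
    exact ⟨⟨(hpmem i).1, Or.inl (hpmem i).2⟩, (hpmem i).2⟩
  · intro i
    exact ⟨⟨(hqmem i).1, Or.inr (max_eq_min_iff'.mpr (hqmem i).2)⟩,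
      max_eq_min_iff'.mpr (hqmem i).2⟩
  · intro t htc hx2
    exact hpsurj t ⟨htc.1, hx2⟩
  · intro t htc hx1
    exact hqsurj t ⟨htc.1, max_eq_min_iff'.mp hx1⟩
  · -- V₁ frequently large
    intro C
    rw [frequently_atTop]
    intro N
    obtain ⟨n1, hn1⟩ := exists_nat_gt ((q N - S.sy 0) / T)
    obtain ⟨n2, hn2⟩ := exists_nat_gt ((C ^ 2 + D) / (g * T) ^ 2)
    set j := n1 + n2 + 1 with hjdef
    have hj1 : 1 ≤ j := by omega
    have hj1' : (1:ℝ) ≤ (j:ℝ) := by exact_mod_cast hj1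
    have hcast1 : (n1:ℝ) ≤ (j:ℝ) := by exact_mod_cast (by omega : n1 ≤ j)
    have hcast2 : (n2:ℝ) ≤ (j:ℝ) := by exact_mod_cast (by omega : n2 ≤ j)
    have hsyj : q N < S.sy j := by
      have h1 := S.HY.s_ge j
      have h2 := (div_lt_iff₀ hT).mp hn1
      nlinarith
    have hνbig : C ^ 2 + D < S.νy j ^ 2 := by
      have h1 : g * T * (j:ℝ) ≤ S.νy j := S.νy_ge_j j
      have h2 := (div_lt_iff₀ (by positivity : (0:ℝ) < (g*T)^2)).mp hn2
      have h3 : C ^ 2 + D < (g * T) ^ 2 * j := by nlinarith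
      have h4 : (0:ℝ) ≤ g * T * j := by positivity
      have h5 : (g * T * j) ^ 2 ≤ S.νy j ^ 2 := by nlinarith
      have h6 : (g * T) ^ 2 * j ≤ (g * T * j) ^ 2 := by nlinarith
      linarith
    obtain ⟨t, ht1, ht2, hcr, hlim, hbound⟩ := S.tstar_exists j hj1
    have ht0 : (0:ℝ) ≤ t := le_trans (S.sy_lt_of_index hj1).le ht1.le
    obtain ⟨i, hi⟩ := hqsurj t ⟨ht0, hcr⟩
    have hiN : N ≤ i := by
      have hlt : q N < q i := by rw [hi]; exact lt_trans hsyj ht1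
      exact (hqmono.lt_iff_lt.mp hlt).le
    refine ⟨i, hiN, ?_⟩
    have hVeq : V₁ i = S.Yv t := huniq1 i t _ hi hlim
    rw [hVeq]
    have h7 : C ^ 2 < S.Yv t ^ 2 := by rw [hD] at hνbig; linarith
    rcases le_or_gt 0 C with hC | hC
    · nlinarith [sq_abs (S.Yv t), abs_nonneg (S.Yv t)]
    · linarith [abs_nonneg (S.Yv t)]
  · -- V₂ frequently large
    intro C
    rw [frequently_atTop]
    intro N
    obtain ⟨n1, hn1⟩ := exists_nat_gt ((p N - S.sy 0) / T)
    obtain ⟨n2, hn2⟩ := exists_nat_gt (C / (g * T))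
    set j := n1 + n2 + 1 with hjdef
    have hj1 : 1 ≤ j := by omega
    have hcast1 : (n1:ℝ) ≤ (j:ℝ) := by exact_mod_cast (by omega : n1 ≤ j)
    have hcast2 : (n2:ℝ) ≤ (j:ℝ) := by exact_mod_cast (by omega : n2 ≤ j)
    have hsyj : p N < S.sy j := by
      have h1 := S.HY.s_ge j
      have h2 := (div_lt_iff₀ hT).mp hn1
      nlinarith
    have hν : C < S.νy j := by
      have h1 : g * T * (j:ℝ) ≤ S.νy j := S.νy_ge_j j
      have h2 := (div_lt_iff₀ hgT).mp hn2
      nlinarith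
    have hpos := S.sy_lt_of_index hj1
    obtain ⟨i, hi⟩ := hpsurj (S.sy j) ⟨hpos.le, S.min_eq_f_at_sy j hpos.le⟩
    have hiN : N ≤ i := by
      have hlt : p N < p i := by rw [hi]; exact hsyj
      exact (hpmono.lt_iff_lt.mp hlt).le
    refine ⟨i, hiN, ?_⟩
    have hVeq : V₂ i = S.νy j := huniq2 i _ _ hi (S.ybounce_right j hpos.le)
    rw [hVeq]
    exact lt_of_lt_of_le hν (le_abs_self _)
  · -- V₁ frequently bounded
    refine ⟨g * T * S.K₁, ?_⟩
    rw [frequently_atTop]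
    intro N
    obtain ⟨j, hj1, hx⟩ := S.sy_large (q N)
    obtain ⟨t, ht1, ht2, hcr, hlim, hbound⟩ := S.tdstar_exists j hj1
    have hsyt : S.sy j < t := lt_trans (S.sy_lt_ay j) ht1
    have ht0 : (0:ℝ) ≤ t := le_trans (S.sy_lt_of_index hj1).le hsyt.le
    obtain ⟨i, hi⟩ := hqsurj t ⟨ht0, hcr⟩
    have hiN : N ≤ i := by
      have hlt : q N < q i := by rw [hi]; exact lt_trans hx hsyt
      exact (hqmono.lt_iff_lt.mp hlt).le
    refine ⟨i, hiN, ?_⟩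
    have hVeq : V₁ i = S.Zv t := huniq1 i t _ hi hlim
    rw [hVeq]
    exact hbound
  · -- V₂ frequently bounded
    refine ⟨g * T * S.K₁, ?_⟩
    rw [frequently_atTop]
    intro N
    obtain ⟨l, hl1, hx⟩ := S.sz_large (p N)
    have hpos := S.sz_lt_of_index hl1
    obtain ⟨i, hi⟩ := hpsurj (S.sz l) ⟨hpos.le, S.min_eq_f_at_sz l hpos.le⟩
    have hiN : N ≤ i := by
      have hlt : p N < p i := by rw [hi]; exact hx
      exact (hpmono.lt_iff_lt.mp hlt).le
    refine ⟨i, hiN, ?_⟩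
    have hVeq : V₂ i = S.νz l := huniq2 i _ _ hi (S.zbounce_right l hpos.le)
    rw [hVeq]
    have : S.νz l = g * T * S.K₁ := rfl
    rw [this, abs_of_nonneg (by positivity)]

end Setup

end BB

/-- Theorem 3,2(b): for two balls of equal positive mass above a plate whose
motion `f` belongs to the class `𝒞`, there is a motion in which the
post-collision speeds of both balls have `limsup = ∞` while both `liminf`s are
finite (i.e. `max(liminf |v⁽¹⁾ᵢ|, liminf |v⁽²⁾ᵢ|) < ∞`).  Here `p i` enumerates
the collisions of `P₂` with the plate (`V₂ i` the velocity just afterwards)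
and `q i` enumerates the collisions of `P₁` with `P₂` (`V₁ i` the velocity of
`P₁` just afterwards). -/
theorem equal_masses_limsup_infinite_liminf_finite
    (g T m : ℝ) (hg : 0 < g) (hT : 0 < T) (hm : 0 < m)
    (f : ℝ → ℝ) (hf : ContDiff ℝ 1 f) (hfper : Function.Periodic f T)
    (hclass : ∃ t₀ : ℝ, ∃ K : ℕ, 0 < K ∧ deriv f t₀ = K * T * g / 2) :
    ∃ M : BouncingBallMotion g f m m, ∃ p q V₁ V₂ : ℕ → ℝ,
      StrictMono p ∧ StrictMono q ∧
      (∀ i : ℕ, p i ∈ M.coll ∧ M.x₂ (p i) = f (p i)) ∧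
      (∀ i : ℕ, q i ∈ M.coll ∧ M.x₁ (q i) = M.x₂ (q i)) ∧
      (∀ t ∈ M.coll, M.x₂ t = f t → ∃ i : ℕ, p i = t) ∧
      (∀ t ∈ M.coll, M.x₁ t = M.x₂ t → ∃ i : ℕ, q i = t) ∧
      (∀ i : ℕ, Tendsto M.v₂ (𝓝[>] (p i)) (𝓝 (V₂ i))) ∧
      (∀ i : ℕ, Tendsto M.v₁ (𝓝[>] (q i)) (𝓝 (V₁ i))) ∧
      (∀ C : ℝ, ∃ᶠ i in atTop, C < |V₁ i|) ∧
      (∀ C : ℝ, ∃ᶠ i in atTop, C < |V₂ i|) ∧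
      (∃ C : ℝ, ∃ᶠ i in atTop, |V₁ i| ≤ C) ∧
      (∃ C : ℝ, ∃ᶠ i in atTop, |V₂ i| ≤ C) := by
  classical
  obtain ⟨t₀, K, hK, hdt₀⟩ := hclass
  have hgT : (0:ℝ) < g * T := mul_pos hg hT
  have hdiff : Differentiable ℝ f := hf.differentiable one_ne_zero
  have hdc : Continuous (deriv f) := hf.continuous_deriv le_rfl
  -- periodicity of the derivative
  have hdper : Function.Periodic (deriv f) T := by
    intro x
    have h1 : (fun y => f (y + T)) = f := funext hfper
    calc deriv f (x + T) = deriv (fun y => f (y + T)) x := (deriv_comp_add_const f T x).symm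
    _ = deriv f x := by rw [h1]
  -- a global Lipschitz bound
  obtain ⟨xm, _, hmax⟩ := (isCompact_Icc (a := (0:ℝ)) (b := T)).exists_isMaxOn
    ⟨0, le_refl 0, hT.le⟩ (hdc.abs.continuousOn)
  set L := |deriv f xm| with hLdef
  have hL : 0 ≤ L := abs_nonneg _
  have hLbound : ∀ x, |deriv f x| ≤ L := by
    intro x
    have h1 : deriv f (x - ↑⌊x / T⌋ * T) = deriv f x := hdper.sub_int_mul_eq ⌊x / T⌋
    have h2 : x - ↑⌊x / T⌋ * T ∈ Set.Icc (0:ℝ) T :=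
      ⟨Int.sub_floor_div_mul_nonneg x hT, (Int.sub_floor_div_mul_lt x hT).le⟩
    rw [← h1]
    exact hmax h2
  have hLip : ∀ a b, |f a - f b| ≤ L * |a - b| := by
    intro a b
    have := Convex.norm_image_sub_le_of_norm_deriv_le (f := f) (s := Set.univ)
      (fun x _ => hdiff x) (fun x _ => hLbound x) convex_univ (Set.mem_univ b) (Set.mem_univ a)
    simpa [Real.norm_eq_abs] using this
  -- a critical point of f
  obtain ⟨u₀, hu₀mem, hdu₀'⟩ := exists_deriv_eq_slope f (by linarith : t₀ < t₀ + T)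
    hf.continuous.continuousOn hdiff.differentiableOn
  have hdu₀ : deriv f u₀ = 0 := by
    rw [hdu₀']
    rw [hfper t₀]
    simp
  -- choice of the speed parameters
  set K₁ : ℕ := ⌈2 * L / (g * T)⌉₊ + 1 with hK₁def
  have hK₁L : L < g * T * K₁ / 2 := by
    have h1 : 2 * L / (g * T) < (K₁:ℝ) := by
      have := Nat.le_ceil (2 * L / (g * T))
      push_cast [hK₁def]
      linarith
    have h2 := (div_lt_iff₀ hgT).mp h1
    linarith
  set N₁ : ℕ := K₁ + 1 + ⌈(f u₀ - f t₀) * 2 / (g * T ^ 2)⌉₊ with hN₁def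
  have hK₁N₁ : (K₁:ℝ) ≤ (N₁:ℝ) := by exact_mod_cast (by omega : K₁ ≤ N₁)
  have hN₁L : L < g * T * N₁ / 2 := by
    have : g * T * K₁ / 2 ≤ g * T * N₁ / 2 := by
      have := mul_le_mul_of_nonneg_left hK₁N₁ hgT.le
      linarith
    linarith
  have hC2 : f u₀ + (g * T * K₁) ^ 2 / (2 * g) < f t₀ + (g * T * N₁) ^ 2 / (2 * g) := by
    set c : ℕ := ⌈(f u₀ - f t₀) * 2 / (g * T ^ 2)⌉₊ with hcdef
    have hc : (f u₀ - f t₀) * 2 / (g * T ^ 2) ≤ (c:ℝ) := Nat.le_ceil _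
    have hc2 : f u₀ - f t₀ ≤ g * T ^ 2 * c / 2 := by
      rw [div_le_iff₀ (by positivity : (0:ℝ) < g * T ^ 2)] at hc
      linarith
    have hNc : (N₁:ℝ) = K₁ + 1 + c := by push_cast [hN₁def]; ring
    have key : (g * T * (N₁:ℝ)) ^ 2 / (2 * g) - (g * T * (K₁:ℝ)) ^ 2 / (2 * g) =
        g * T ^ 2 * ((N₁:ℝ) ^ 2 - (K₁:ℝ) ^ 2) / 2 := by
      field_simp
    have hK₁0 : (0:ℝ) ≤ (K₁:ℝ) := Nat.cast_nonneg _
    have hc0 : (0:ℝ) ≤ (c:ℝ) := Nat.cast_nonneg _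
    have hsq : (1:ℝ) + c ≤ (N₁:ℝ) ^ 2 - (K₁:ℝ) ^ 2 := by
      rw [hNc]
      nlinarith
    have hT2 : (0:ℝ) < g * T ^ 2 := by positivity
    nlinarith
  set S : Setup g T f :=
    { K := K, N₁ := N₁, K₁ := K₁, t₀ := t₀, u₀ := u₀, L := L,
      hg := hg, hT := hT, hK := hK, hfc := hf.continuous, hL := hL, hLip := hLip,
      hper := hfper, hdper := hdper, hdt₀ := hdt₀, hdu₀ := hdu₀, hu₀ := hu₀mem,
      hK₁L := hK₁L, hN₁L := hN₁L, hC2 := hC2 } with hSdef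
  exact S.main m
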